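/- arXiv:2401.08620 — 12 statements merged into one kernel-verified Lean document; each statement's English description precedes it below -/
import Mathlib

section
/- Let f:[a,b]→ℝ be continuous and Φ-Hölder (i.e., |f(x)−f(y)| ≤ Φ(|x−y|) for all x,y ∈ [a,b]). Then for every n ∈ ℕ, n ≥ 1, max{f(a), f(b)} − (n/2)·Φ((b−a)/n) ≤ T_n(f)/(b−a) ≤ min{f(a), f(b)} + (n/2)·Φ((b−a)/n), where T_n(f) is the composite trapezoidal sum with n equal subintervals. -/
open Finset

theorem trapezoid_phi_holder
    (a b : ℝ) (hab : a < b) (f Φ : ℝ → ℝ)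
    (hΦ : ∀ t ∈ Set.Icc (0 : ℝ) (b - a), 0 ≤ Φ t)
    (hf : ContinuousOn f (Set.Icc a b))
    (hhold : ∀ x ∈ Set.Icc a b, ∀ y ∈ Set.Icc a b, |f x - f y| ≤ Φ |x - y|)
    (n : ℕ) (hn : 1 ≤ n) :
    max (f a) (f b) - (n / 2 : ℝ) * Φ ((b - a) / n) ≤ ((b - a) / (2 * n) * (f a + 2 * ∑ i ∈ Finset.Ico 1 n, f (a + i * (b - a) / n) + f b)) / (b - a) ∧
    ((b - a) / (2 * n) * (f a + 2 * ∑ i ∈ Finset.Ico 1 n, f (a + i * (b - a) / n) + f b)) / (b - a) ≤ min (f a) (f b) + (n / 2 : ℝ) * Φ ((b - a) / n) := by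
  have hnR : (0:ℝ) < (n:ℝ) := by exact_mod_cast Nat.lt_of_lt_of_le Nat.zero_lt_one hn
  have hn1R : (1:ℝ) ≤ (n:ℝ) := by exact_mod_cast hn
  have hba : (0:ℝ) < b - a := by linarith
  set h := (b - a) / n with hh
  have hhpos : 0 < h := div_pos hba hnR
  have hhle : h ≤ b - a := by
    rw [hh, div_le_iff₀ hnR]; nlinarith
  have hΦh : 0 ≤ Φ h := hΦ h ⟨le_of_lt hhpos, hhle⟩
  have hnh : (n:ℝ) * h = b - a := by rw [hh]; field_simp
  have hmem : ∀ i : ℕ, i ≤ n → a + i * h ∈ Set.Icc a b := by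
    intro i hi
    have h1 : (i:ℝ) ≤ n := by exact_mod_cast hi
    constructor
    · nlinarith [(Nat.cast_nonneg i : (0:ℝ) ≤ (i:ℝ)), hhpos.le]
    · nlinarith [hhpos.le]
  -- chained Hölder estimate
  have keyg : ∀ j : ℕ, ∀ i : ℕ, i ≤ j → j ≤ n →
      |f (a + j * h) - f (a + i * h)| ≤ ((j:ℝ) - i) * Φ h := by
    intro j
    induction j with
    | zero =>
      intro i hi _
      obtain rfl : i = 0 := Nat.le_zero.mp hi
      simp
    | succ j ih =>
      intro i hij hjn
      rcases eq_or_lt_of_le hij with rfl | hlt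
      · simp
      · have hij' : i ≤ j := Nat.lt_succ_iff.mp hlt
        have hjn' : j ≤ n := Nat.le_of_succ_le hjn
        have step : |f (a + (j+1 : ℕ) * h) - f (a + j * h)| ≤ Φ h := by
          have habs : |(a + ((j:ℕ)+1:ℕ) * h) - (a + (j:ℕ) * h)| = h := by
            push_cast
            rw [abs_of_nonneg (by nlinarith [hhpos.le])]
            ring
          have := hhold _ (hmem (j+1) hjn) _ (hmem j hjn')
          rwa [habs] at this
        have ihh := ih i hij' hjn'
        have tri : |f (a + ((j:ℕ)+1:ℕ) * h) - f (a + i * h)| ≤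
            |f (a + ((j:ℕ)+1:ℕ) * h) - f (a + (j:ℕ) * h)| + |f (a + (j:ℕ) * h) - f (a + i * h)| :=
          abs_sub_le _ _ _
        push_cast at tri step ihh ⊢
        linarith
  have hxb : a + (n:ℕ) * h = b := by rw [hnh]; ring
  -- per-node bounds
  have nodeA : ∀ i ∈ Finset.Ico 1 n,
      f a - (i:ℝ) * Φ h ≤ f (a + i * h) ∧ f (a + i * h) ≤ f a + (i:ℝ) * Φ h := by
    intro i hi
    obtain ⟨_, hi2⟩ := Finset.mem_Ico.mp hi
    have h0 := keyg i 0 (Nat.zero_le _) (le_of_lt hi2)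
    simp only [Nat.cast_zero, zero_mul, add_zero, sub_zero] at h0
    have h1 := abs_le.mp h0
    constructor <;> linarith [h1.1, h1.2]
  have nodeB : ∀ i ∈ Finset.Ico 1 n,
      f b - ((n:ℝ) - i) * Φ h ≤ f (a + i * h) ∧ f (a + i * h) ≤ f b + ((n:ℝ) - i) * Φ h := by
    intro i hi
    obtain ⟨_, hi2⟩ := Finset.mem_Ico.mp hi
    have h0 := keyg n i (le_of_lt hi2) le_rfl
    rw [hxb] at h0
    have h1 := abs_le.mp h0
    constructor <;> linarith [h1.1, h1.2]
  have fab := abs_le.mp (by simpa [hxb] using keyg n 0 (Nat.zero_le _) le_rfl)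
  -- Gauss sum
  set A := ∑ i ∈ Finset.Ico 1 n, (i:ℝ) with hA
  have cardI : ((Finset.Ico 1 n).card : ℝ) = (n:ℝ) - 1 := by
    rw [Nat.card_Ico]; push_cast [Nat.cast_sub hn]; ring
  have gauss : A * 2 = (n:ℝ) * ((n:ℝ) - 1) := by
    have h1 : A = ∑ i ∈ Finset.range n, (i:ℝ) := by
      rw [hA, Finset.range_eq_Ico,
        Finset.sum_eq_sum_Ico_succ_bot (by omega : 0 < n)]
      simp
    have h2 := congrArg (fun k : ℕ => (k : ℝ)) (Finset.sum_range_id_mul_two n)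
    push_cast [Nat.cast_sub hn] at h2
    rw [h1]
    linarith [h2]
  have hAΦ : A * Φ h * 2 = ((n:ℝ)^2 - n) * Φ h := by
    linear_combination Φ h * gauss
  -- generic linear sum computation
  have sumlin : ∀ c d : ℝ, ∑ i ∈ Finset.Ico 1 n, (c + d * (i:ℝ)) = ((n:ℝ)-1) * c + d * A := by
    intro c d
    rw [Finset.sum_add_distrib, Finset.sum_const, nsmul_eq_mul, cardI, ← Finset.mul_sum, ← hA]
  have e1 : ∑ i ∈ Finset.Ico 1 n, (f a - (i:ℝ) * Φ h) = ((n:ℝ)-1) * f a + (-(Φ h)) * A := by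
    rw [← sumlin]; exact Finset.sum_congr rfl (fun i _ => by ring)
  have e2 : ∑ i ∈ Finset.Ico 1 n, (f a + (i:ℝ) * Φ h) = ((n:ℝ)-1) * f a + (Φ h) * A := by
    rw [← sumlin]; exact Finset.sum_congr rfl (fun i _ => by ring)
  have e3 : ∑ i ∈ Finset.Ico 1 n, (f b - ((n:ℝ) - (i:ℝ)) * Φ h)
      = ((n:ℝ)-1) * (f b - (n:ℝ) * Φ h) + (Φ h) * A := by
    rw [← sumlin]; exact Finset.sum_congr rfl (fun i _ => by ring)
  have e4 : ∑ i ∈ Finset.Ico 1 n, (f b + ((n:ℝ) - (i:ℝ)) * Φ h)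
      = ((n:ℝ)-1) * (f b + (n:ℝ) * Φ h) + (-(Φ h)) * A := by
    rw [← sumlin]; exact Finset.sum_congr rfl (fun i _ => by ring)
  set T := ∑ i ∈ Finset.Ico 1 n, f (a + i * h) with hT
  have SLa : ((n:ℝ)-1) * f a + (-(Φ h)) * A ≤ T := by
    rw [← e1]; exact Finset.sum_le_sum (fun i hi => (nodeA i hi).1)
  have SUa : T ≤ ((n:ℝ)-1) * f a + (Φ h) * A := by
    rw [← e2]; exact Finset.sum_le_sum (fun i hi => (nodeA i hi).2)
  have SLb : ((n:ℝ)-1) * (f b - (n:ℝ) * Φ h) + (Φ h) * A ≤ T := by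
    rw [← e3]; exact Finset.sum_le_sum (fun i hi => (nodeB i hi).1)
  have SUb : T ≤ ((n:ℝ)-1) * (f b + (n:ℝ) * Φ h) + (-(Φ h)) * A := by
    rw [← e4]; exact Finset.sum_le_sum (fun i hi => (nodeB i hi).2)
  -- rewrite node points in the goal
  have hpt : ∀ i : ℕ, a + (i:ℝ) * (b - a) / (n:ℝ) = a + (i:ℝ) * h := by
    intro i; rw [hh, mul_div_assoc]
  simp only [hpt, ← hT]
  clear_value A T h
  have h2n : (0:ℝ) < 2 * n := by positivity
  have hE : ((b - a) / (2 * n) * (f a + 2 * T + f b)) / (b - a)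
      = (f a + 2 * T + f b) / (2 * n) := by
    field_simp
  rw [hE]
  have key1 : f a * (2*(n:ℝ)) ≤ (f a + 2 * T + f b) + (n:ℝ)^2 * Φ h := by
    linarith [SLa, fab.1, hAΦ]
  have key2 : f b * (2*(n:ℝ)) ≤ (f a + 2 * T + f b) + (n:ℝ)^2 * Φ h := by
    linarith [SLb, fab.2, hAΦ]
  have key3 : (f a + 2 * T + f b) ≤ f a * (2*(n:ℝ)) + (n:ℝ)^2 * Φ h := by
    linarith [SUa, fab.2, hAΦ]
  have key4 : (f a + 2 * T + f b) ≤ f b * (2*(n:ℝ)) + (n:ℝ)^2 * Φ h := by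
    linarith [SUb, fab.1, hAΦ]
  constructor
  · rw [sub_le_iff_le_add, max_le_iff]
    constructor
    · rw [← sub_le_iff_le_add, le_div_iff₀ h2n]
      linarith [key1]
    · rw [← sub_le_iff_le_add, le_div_iff₀ h2n]
      linarith [key2]
  · rw [← sub_le_iff_le_add, le_min_iff]
    constructor
    · rw [sub_le_iff_le_add, div_le_iff₀ h2n]
      linarith [key3]
    · rw [sub_le_iff_le_add, div_le_iff₀ h2n]
      linarith [key4]
end

section
/- Let f:[a,b]→ℝ be continuous and Φ-monotone, where Φ: [0,b−a] → [0,∞) is superadditive. Then for every n ∈ ℕ, n ≥ 1, f(a) − Φ(b−a)/2 ≤ T_n(f)/(b−a) ≤ f(b) + Φ(b−a)/2, where T_n(f) is the composite trapezoidal sum with n equal subintervals. -/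
open Finset

theorem trapezoid_phi_monotone_superadditive
    (a b : ℝ) (hab : a < b) (f Φ : ℝ → ℝ)
    (hΦ : ∀ t ∈ Set.Icc (0 : ℝ) (b - a), 0 ≤ Φ t)
    (hsuper : ∀ x y, 0 ≤ x → 0 ≤ y → x + y ≤ b - a → Φ x + Φ y ≤ Φ (x + y))
    (hf : ContinuousOn f (Set.Icc a b))
    (hmono : ∀ x y, a ≤ x → x < y → y ≤ b → f x ≤ f y + Φ (y - x))
    (n : ℕ) (hn : 1 ≤ n) :
    f a - Φ (b - a) / 2 ≤ ((b - a) / (2 * n) * (f a + 2 * ∑ i ∈ Finset.Ico 1 n, f (a + i * (b - a) / n) + f b)) / (b - a) ∧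
    ((b - a) / (2 * n) * (f a + 2 * ∑ i ∈ Finset.Ico 1 n, f (a + i * (b - a) / n) + f b)) / (b - a) ≤ f b + Φ (b - a) / 2 := by
  have hba : (0:ℝ) < b - a := by linarith
  have hnR : (0:ℝ) < (n:ℝ) := by exact_mod_cast Nat.lt_of_lt_of_le Nat.zero_lt_one hn
  set g : ℕ → ℝ := fun i => f (a + i * (b - a) / n) with hg
  -- endpoints bound
  have hab' : f a ≤ f b + Φ (b - a) := hmono a b le_rfl hab le_rfl
  -- basic facts for interior nodes
  have hx : ∀ i : ℕ, 1 ≤ i → i < n →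
      a < a + i * (b - a) / n ∧ a + i * (b - a) / n < b := by
    intro i hi1 hi2
    have h1 : (1:ℝ) ≤ (i:ℝ) := by exact_mod_cast hi1
    have h2 : (i:ℝ) < (n:ℝ) := by exact_mod_cast hi2
    constructor
    · have : 0 < (i:ℝ) * (b - a) / n := by positivity
      linarith
    · have hlt : (i:ℝ) * (b - a) / n < b - a := by
        rw [div_lt_iff₀ hnR]; nlinarith
      linarith
  -- per-pair key bounds
  have key : ∀ i ∈ Finset.Ico 1 n,
      2 * f a - Φ (b - a) ≤ g i + g (n - i) ∧ g i + g (n - i) ≤ 2 * f b + Φ (b - a) := by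
    intro i hi
    rw [Finset.mem_Ico] at hi
    obtain ⟨hi1, hi2⟩ := hi
    have hi1' : 1 ≤ n - i := by omega
    have hi2' : n - i < n := by omega
    have hcast : ((n - i : ℕ) : ℝ) = (n:ℝ) - (i:ℝ) := by
      push_cast [Nat.cast_sub hi2.le]; ring
    have h1 : (1:ℝ) ≤ (i:ℝ) := by exact_mod_cast hi1
    have h2 : (i:ℝ) < (n:ℝ) := by exact_mod_cast hi2
    obtain ⟨ha1, hb1⟩ := hx i hi1 hi2
    obtain ⟨ha2, hb2⟩ := hx (n - i) hi1' hi2'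
    -- superadditivity on the two complementary pieces
    have hsum : (i:ℝ) * (b - a) / n + ((n:ℝ) - (i:ℝ)) * (b - a) / n = b - a := by
      field_simp; ring
    have hp1 : (0:ℝ) ≤ (i:ℝ) * (b - a) / n := by positivity
    have hp2 : (0:ℝ) ≤ ((n:ℝ) - (i:ℝ)) * (b - a) / n := by
      have : (0:ℝ) ≤ (n:ℝ) - (i:ℝ) := by linarith
      positivity
    have hS : Φ ((i:ℝ) * (b - a) / n) + Φ (((n:ℝ) - (i:ℝ)) * (b - a) / n) ≤ Φ (b - a) := by
      have := hsuper ((i:ℝ) * (b - a) / n) (((n:ℝ) - (i:ℝ)) * (b - a) / n) hp1 hp2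
        (le_of_eq hsum)
      rwa [hsum] at this
    constructor
    · -- lower: f a ≤ g i + Φ(i h), f a ≤ g (n-i) + Φ((n-i) h)
      have l1 := hmono a (a + i * (b - a) / n) le_rfl ha1 hb1.le
      have l2 := hmono a (a + (n - i : ℕ) * (b - a) / n) le_rfl ha2 hb2.le
      rw [add_sub_cancel_left] at l1 l2
      simp only [hg]
      rw [hcast] at l2 ⊢
      linarith
    · -- upper: g i ≤ f b + Φ(b - x_i), g (n-i) ≤ f b + Φ(b - x_{n-i})
      have l1 := hmono (a + i * (b - a) / n) b ha1.le hb1 le_rfl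
      have l2 := hmono (a + (n - i : ℕ) * (b - a) / n) b ha2.le hb2 le_rfl
      have e1 : b - (a + (i:ℝ) * (b - a) / n) = ((n:ℝ) - (i:ℝ)) * (b - a) / n := by
        field_simp; ring
      have e2 : b - (a + ((n - i : ℕ):ℝ) * (b - a) / n) = (i:ℝ) * (b - a) / n := by
        rw [hcast]; field_simp; ring
      rw [e1] at l1
      rw [e2] at l2
      simp only [hg]
      rw [hcast] at l2 ⊢
      linarith
  -- reflected sum equals the sum
  have hrefl : ∑ i ∈ Finset.Ico 1 n, g (n - i) = ∑ i ∈ Finset.Ico 1 n, g i := by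
    apply Finset.sum_nbij' (fun i => n - i) (fun i => n - i)
    all_goals intro i hi <;> rw [Finset.mem_Ico] at * <;> omega
  -- summed bounds
  have hcard : ((Finset.Ico 1 n).card : ℝ) = (n:ℝ) - 1 := by
    rw [Nat.card_Ico]
    push_cast [Nat.cast_sub hn]
    ring
  have hlow : ((n:ℝ) - 1) * (2 * f a - Φ (b - a)) ≤ 2 * ∑ i ∈ Finset.Ico 1 n, g i := by
    have := Finset.sum_le_sum (fun i hi => (key i hi).1)
    rw [Finset.sum_const, Finset.sum_add_distrib, hrefl] at this
    rw [nsmul_eq_mul, hcard] at this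
    linarith
  have hhigh : 2 * ∑ i ∈ Finset.Ico 1 n, g i ≤ ((n:ℝ) - 1) * (2 * f b + Φ (b - a)) := by
    have := Finset.sum_le_sum (fun i hi => (key i hi).2)
    rw [Finset.sum_const, Finset.sum_add_distrib, hrefl] at this
    rw [nsmul_eq_mul, hcard] at this
    linarith
  -- simplify the trapezoid expression
  have hT : ((b - a) / (2 * n) * (f a + 2 * ∑ i ∈ Finset.Ico 1 n, g i + f b)) / (b - a)
      = (f a + 2 * ∑ i ∈ Finset.Ico 1 n, g i + f b) / (2 * n) := by
    field_simp
  simp only [hg] at hT ⊢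
  rw [hT]
  constructor
  · rw [le_div_iff₀ (by positivity)]
    simp only [hg] at hlow
    nlinarith [hlow]
  · rw [div_le_iff₀ (by positivity)]
    simp only [hg] at hhigh
    nlinarith [hhigh]
end

section
/- Let f:[a,b]→ℝ be continuous and Φ-monotone. Then for every even n ∈ ℕ, n ≥ 2, the composite Simpson sum S_n(f) := ((b−a)/(3n))·[f(x_0) + 2∑_{i=1}^{n/2−1} f(x_{2i}) + 4∑_{i=1}^{n/2} f(x_{2i−1}) + f(x_n)] satisfies f(a) − (n/2)·Φ((b−a)/n) ≤ S_n(f)/(b−a) ≤ f(b) + (n/2)·Φ((b−a)/n). -/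
open Finset

lemma auxIco (m : ℕ) : ∑ i ∈ Finset.Ico 1 m, (i:ℝ) = m*(m-1)/2 := by
  induction m with
  | zero => simp
  | succ m ih =>
    rcases Nat.eq_zero_or_pos m with rfl | hm
    · simp
    · rw [Finset.sum_Ico_succ_top (by omega), ih]
      push_cast; ring

lemma auxIcc (m : ℕ) : ∑ i ∈ Finset.Icc 1 m, (2*(i:ℝ)-1) = m^2 := by
  induction m with
  | zero => simp
  | succ m ih =>
    rw [Finset.sum_Icc_succ_top (by omega), ih]
    push_cast; ring

theorem simpson_phi_monotone
    (a b : ℝ) (hab : a < b) (f Φ : ℝ → ℝ)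
    (hΦ : ∀ t ∈ Set.Icc (0 : ℝ) (b - a), 0 ≤ Φ t)
    (hf : ContinuousOn f (Set.Icc a b))
    (hmono : ∀ x y, a ≤ x → x < y → y ≤ b → f x ≤ f y + Φ (y - x))
    (n : ℕ) (hn : 2 ≤ n) (hne : Even n) :
    f a - (n / 2 : ℝ) * Φ ((b - a) / n) ≤ ((b - a) / (3 * n) * (f a + 2 * ∑ i ∈ Finset.Ico 1 (n / 2), f (a + (2 * i : ℕ) * (b - a) / n) + 4 * ∑ i ∈ Finset.Icc 1 (n / 2), f (a + (2 * i - 1 : ℕ) * (b - a) / n) + f b)) / (b - a) ∧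
    ((b - a) / (3 * n) * (f a + 2 * ∑ i ∈ Finset.Ico 1 (n / 2), f (a + (2 * i : ℕ) * (b - a) / n) + 4 * ∑ i ∈ Finset.Icc 1 (n / 2), f (a + (2 * i - 1 : ℕ) * (b - a) / n) + f b)) / (b - a) ≤ f b + (n / 2 : ℝ) * Φ ((b - a) / n) := by
  have hba : (0:ℝ) < b - a := sub_pos.2 hab
  obtain ⟨m, hm⟩ := hne
  have hnm : n = 2 * m := by omega
  have hm1 : 1 ≤ m := by omega
  have hn0 : (0:ℝ) < n := by exact_mod_cast Nat.cast_pos.2 (by omega)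
  set h : ℝ := (b - a) / n with hh
  have hhpos : 0 < h := div_pos hba hn0
  have hΦh : 0 ≤ Φ h := hΦ h ⟨hhpos.le, div_le_self hba.le (by exact_mod_cast Nat.one_le_cast.2 (by omega))⟩
  have hnh : (n:ℝ) * h = b - a := by rw [hh]; field_simp
  have step : ∀ k : ℕ, k < n → f (a + k * h) ≤ f (a + ((k:ℝ)+1) * h) + Φ h := by
    intro k hk
    have hk' : ((k:ℝ) + 1) ≤ n := by exact_mod_cast Nat.succ_le_of_lt hk
    have hx : a ≤ a + k * h := by
      have : (0:ℝ) ≤ k * h := mul_nonneg (Nat.cast_nonneg k) hhpos.le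
      linarith
    have hxy : a + (k:ℝ) * h < a + ((k:ℝ)+1) * h := by nlinarith
    have hyb : a + ((k:ℝ)+1) * h ≤ b := by nlinarith
    have H := hmono _ _ hx hxy hyb
    have harg : a + ((k:ℝ)+1) * h - (a + k * h) = h := by ring
    rwa [harg] at H
  have low : ∀ k : ℕ, k ≤ n → f a - k * Φ h ≤ f (a + k * h) := by
    intro k
    induction k with
    | zero => intro _; simp
    | succ k ih =>
      intro hk
      have h1 := ih (by omega)
      have h2 := step k (by omega)
      push_cast at h1 h2 ⊢
      linarith
  have high : ∀ j : ℕ, j ≤ n → f (a + ((n:ℝ) - j) * h) ≤ f b + j * Φ h := by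
    intro j
    induction j with
    | zero =>
      intro _
      have e : a + ((n:ℝ) - ((0:ℕ):ℝ)) * h = b := by push_cast; rw [sub_zero]; linarith [hnh]
      rw [e]; simp
    | succ j ih =>
      intro hj
      have h1 := ih (by omega)
      have h2 := step (n - j - 1) (by omega)
      have e1 : ((n - j - 1 : ℕ) : ℝ) = (n:ℝ) - (j+1) := by
        push_cast [Nat.cast_sub (show j + 1 ≤ n from hj), Nat.sub_sub]
        ring
      rw [e1] at h2
      have e2 : ((n:ℝ) - (j+1)) + 1 = (n:ℝ) - j := by ring
      rw [e2] at h2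
      push_cast
      linarith
  have high' : ∀ k : ℕ, k ≤ n → f (a + (k:ℝ) * h) ≤ f b + ((n:ℝ) - k) * Φ h := by
    intro k hk
    have := high (n - k) (by omega)
    have e1 : ((n - k : ℕ) : ℝ) = (n:ℝ) - k := by push_cast [Nat.cast_sub hk]; ring
    rw [e1] at this
    have e2 : (n:ℝ) - ((n:ℝ) - k) = k := by ring
    rw [e2] at this
    exact this
  have node : ∀ k : ℕ, a + (k:ℝ) * (b - a) / n = a + (k:ℝ) * h := by
    intro k; rw [hh, mul_div_assoc]
  have hm' : n / 2 = m := by omega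
  have hnr : (n:ℝ) = 2*m := by exact_mod_cast congrArg (Nat.cast : ℕ → ℝ) hnm
  simp only [node, hm']
  set S2 : ℝ := ∑ i ∈ Finset.Ico 1 m, f (a + ((2 * i : ℕ) : ℝ) * h) with hS2
  set S4 : ℝ := ∑ i ∈ Finset.Icc 1 m, f (a + ((2 * i - 1 : ℕ) : ℝ) * h) with hS4
  have hS2low : (m:ℝ)*f a - f a - ((m:ℝ)*(m-1)) * Φ h ≤ S2 := by
    have hb : ∀ i ∈ Finset.Ico 1 m, f a - 2*(i:ℝ)*Φ h ≤ f (a + ((2 * i : ℕ) : ℝ) * h) := by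
      intro i hi
      simp only [Finset.mem_Ico] at hi
      have := low (2*i) (by omega)
      push_cast at this ⊢
      linarith
    have hsum := Finset.sum_le_sum hb
    have hval : ∑ i ∈ Finset.Ico 1 m, (f a - 2*(i:ℝ)*Φ h)
        = (m:ℝ)*f a - f a - ((m:ℝ)*(m-1)) * Φ h := by
      rw [Finset.sum_sub_distrib, Finset.sum_const, Nat.card_Ico]
      have e : ∑ i ∈ Finset.Ico 1 m, 2*(i:ℝ)*Φ h = (∑ i ∈ Finset.Ico 1 m, (i:ℝ)) * (2*Φ h) := by
        rw [Finset.sum_mul]; exact Finset.sum_congr rfl fun i _ => by ring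
      rw [e, auxIco, nsmul_eq_mul, Nat.cast_sub hm1]
      push_cast; ring
    linarith [hval ▸ hsum]
  have hS2high : S2 ≤ (m:ℝ)*f b - f b + ((m:ℝ)*(m-1)) * Φ h := by
    have hb : ∀ i ∈ Finset.Ico 1 m, f (a + ((2 * i : ℕ) : ℝ) * h) ≤ f b + ((n:ℝ) - 2*(i:ℝ))*Φ h := by
      intro i hi
      simp only [Finset.mem_Ico] at hi
      have := high' (2*i) (by omega)
      push_cast at this ⊢
      linarith
    have hsum := Finset.sum_le_sum hb
    have hval : ∑ i ∈ Finset.Ico 1 m, (f b + ((n:ℝ) - 2*(i:ℝ))*Φ h)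
        = (m:ℝ)*f b - f b + ((m:ℝ)*(m-1)) * Φ h := by
      have e : ∀ i ∈ Finset.Ico 1 m, f b + ((n:ℝ) - 2*(i:ℝ))*Φ h
          = (f b + (n:ℝ)*Φ h) - (i:ℝ)*(2*Φ h) := fun i _ => by ring
      rw [Finset.sum_congr rfl e, Finset.sum_sub_distrib, Finset.sum_const, ← Finset.sum_mul,
        auxIco, Nat.card_Ico, nsmul_eq_mul, Nat.cast_sub hm1, hnr]
      push_cast; ring
    linarith [hval ▸ hsum]
  have hcast4 : ∀ i ∈ Finset.Icc 1 m, ((2 * i - 1 : ℕ) : ℝ) = 2*(i:ℝ) - 1 := by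
    intro i hi
    simp only [Finset.mem_Icc] at hi
    push_cast [Nat.cast_sub (show 1 ≤ 2*i by omega)]
    ring
  have hS4low : (m:ℝ)*f a - ((m:ℝ)^2) * Φ h ≤ S4 := by
    have hb : ∀ i ∈ Finset.Icc 1 m, f a - (2*(i:ℝ)-1)*Φ h ≤ f (a + ((2 * i - 1 : ℕ) : ℝ) * h) := by
      intro i hi
      simp only [Finset.mem_Icc] at hi
      have := low (2*i-1) (by omega)
      rw [hcast4 i (by simp [Finset.mem_Icc]; omega)] at this ⊢
      linarith
    have hsum := Finset.sum_le_sum hb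
    have hval : ∑ i ∈ Finset.Icc 1 m, (f a - (2*(i:ℝ)-1)*Φ h)
        = (m:ℝ)*f a - ((m:ℝ)^2) * Φ h := by
      rw [Finset.sum_sub_distrib, Finset.sum_const, Nat.card_Icc, ← Finset.sum_mul, auxIcc,
        nsmul_eq_mul]
      push_cast; ring
    linarith [hval ▸ hsum]
  have hS4high : S4 ≤ (m:ℝ)*f b + ((m:ℝ)^2) * Φ h := by
    have hb : ∀ i ∈ Finset.Icc 1 m, f (a + ((2 * i - 1 : ℕ) : ℝ) * h) ≤ f b + ((n:ℝ) - (2*(i:ℝ)-1))*Φ h := by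
      intro i hi
      simp only [Finset.mem_Icc] at hi
      have := high' (2*i-1) (by omega)
      rw [hcast4 i (by simp [Finset.mem_Icc]; omega)] at this ⊢
      linarith
    have hsum := Finset.sum_le_sum hb
    have hval : ∑ i ∈ Finset.Icc 1 m, (f b + ((n:ℝ) - (2*(i:ℝ)-1))*Φ h)
        = (m:ℝ)*f b + ((m:ℝ)^2) * Φ h := by
      have e : ∀ i ∈ Finset.Icc 1 m, f b + ((n:ℝ) - (2*(i:ℝ)-1))*Φ h
          = (f b + (n:ℝ)*Φ h) - (2*(i:ℝ)-1)*Φ h := fun i _ => by ring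
      rw [Finset.sum_congr rfl e, Finset.sum_sub_distrib, Finset.sum_const, ← Finset.sum_mul,
        auxIcc, Nat.card_Icc, nsmul_eq_mul, hnr]
      push_cast; ring
    linarith [hval ▸ hsum]
  have hfb_low : f a - (n:ℝ) * Φ h ≤ f b := by
    have := low n le_rfl
    have e : a + (n:ℝ) * h = b := by linarith [hnh]
    rwa [e] at this
  have hfa_high : f a ≤ f b + (n:ℝ) * Φ h := by linarith
  have key : ((b - a) / (3 * n) * (f a + 2 * S2 + 4 * S4 + f b)) / (b - a)
      = (f a + 2 * S2 + 4 * S4 + f b) / (3 * n) := by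
    field_simp
  rw [key]
  have h3n : (0:ℝ) < 3 * n := by positivity
  constructor
  · rw [le_div_iff₀ h3n]
    rw [hnr]
    nlinarith [hS2low, hS4low, hfb_low, hΦh]
  · rw [div_le_iff₀ h3n]
    rw [hnr]
    nlinarith [hS2high, hS4high, hfa_high, hΦh]
end

section
/- Let f:[a,b]→ℝ be continuous and Φ-Hölder. Then for every even n ∈ ℕ, n ≥ 2, max{f(a), f(b)} − (n/2)·Φ((b−a)/n) ≤ S_n(f)/(b−a) ≤ min{f(a), f(b)} + (n/2)·Φ((b−a)/n), where S_n(f) is the composite Simpson sum with n equal subintervals. -/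
open Finset

theorem simpson_phi_holder
    (a b : ℝ) (hab : a < b) (f Φ : ℝ → ℝ)
    (hΦ : ∀ t ∈ Set.Icc (0 : ℝ) (b - a), 0 ≤ Φ t)
    (hf : ContinuousOn f (Set.Icc a b))
    (hhold : ∀ x ∈ Set.Icc a b, ∀ y ∈ Set.Icc a b, |f x - f y| ≤ Φ |x - y|)
    (n : ℕ) (hn : 2 ≤ n) (hne : Even n) :
    max (f a) (f b) - (n / 2 : ℝ) * Φ ((b - a) / n) ≤ ((b - a) / (3 * n) * (f a + 2 * ∑ i ∈ Finset.Ico 1 (n / 2), f (a + (2 * i : ℕ) * (b - a) / n) + 4 * ∑ i ∈ Finset.Icc 1 (n / 2), f (a + (2 * i - 1 : ℕ) * (b - a) / n) + f b)) / (b - a) ∧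
    ((b - a) / (3 * n) * (f a + 2 * ∑ i ∈ Finset.Ico 1 (n / 2), f (a + (2 * i : ℕ) * (b - a) / n) + 4 * ∑ i ∈ Finset.Icc 1 (n / 2), f (a + (2 * i - 1 : ℕ) * (b - a) / n) + f b)) / (b - a) ≤ min (f a) (f b) + (n / 2 : ℝ) * Φ ((b - a) / n) := by
  obtain ⟨m, hm⟩ := hne
  have hmn : n = 2 * m := by omega
  have hm1 : 1 ≤ m := by omega
  have hm2 : n / 2 = m := by omega
  have hba : (0:ℝ) < b - a := sub_pos.2 hab
  have hn0 : 0 < n := by omega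
  have hnR : (0:ℝ) < n := by exact_mod_cast hn0
  simp only [hm2, mul_div_assoc]
  set h : ℝ := (b - a) / n with hh
  have hh0 : 0 < h := div_pos hba hnR
  have hnm : (n:ℝ) = 2 * m := by rw [hmn]; push_cast; ring
  have hhb : h ≤ b - a := by
    rw [hh, div_le_iff₀ hnR]
    have : (1:ℝ) ≤ n := by exact_mod_cast hn0
    nlinarith
  have hΦh : 0 ≤ Φ h := hΦ h ⟨hh0.le, hhb⟩
  have hbeq : a + (n:ℝ) * h = b := by
    rw [hh]; field_simp; ring
  have hmem : ∀ j : ℕ, j ≤ n → a + (j:ℝ) * h ∈ Set.Icc a b := by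
    intro j hj
    have hj0 : (0:ℝ) ≤ j := Nat.cast_nonneg j
    have hjn : (j:ℝ) ≤ n := by exact_mod_cast hj
    constructor
    · nlinarith
    · nlinarith [mul_le_mul_of_nonneg_right hjn hh0.le]
  have chain : ∀ d k : ℕ, k + d ≤ n →
      |f (a + ((k + d : ℕ):ℝ) * h) - f (a + (k:ℝ) * h)| ≤ (d:ℝ) * Φ h := by
    intro d
    induction d with
    | zero => intro k _; simp
    | succ d ih =>
      intro k hk
      have h2 := ih k (by omega)
      have h1 : |f (a + ((k + (d+1) : ℕ):ℝ) * h) - f (a + ((k + d : ℕ):ℝ) * h)| ≤ Φ h := by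
        have hx := hmem (k + (d+1)) (by omega)
        have hy := hmem (k + d) (by omega)
        have := hhold _ hx _ hy
        have e : |(a + ((k + (d+1) : ℕ):ℝ) * h) - (a + ((k + d : ℕ):ℝ) * h)| = h := by
          have e2 : (a + ((k + (d+1) : ℕ):ℝ) * h) - (a + ((k + d : ℕ):ℝ) * h) = h := by
            push_cast; ring
          rw [e2, abs_of_pos hh0]
        rwa [e] at this
      calc |f (a + ((k + (d+1) : ℕ):ℝ) * h) - f (a + (k:ℝ) * h)|
          ≤ |f (a + ((k + (d+1) : ℕ):ℝ) * h) - f (a + ((k + d : ℕ):ℝ) * h)|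
            + |f (a + ((k + d : ℕ):ℝ) * h) - f (a + (k:ℝ) * h)| := abs_sub_le _ _ _
        _ ≤ Φ h + (d:ℝ) * Φ h := add_le_add h1 h2
        _ = ((d+1 : ℕ):ℝ) * Φ h := by push_cast; ring
  have bndA : ∀ j : ℕ, j ≤ n → |f (a + (j:ℝ) * h) - f a| ≤ (j:ℝ) * Φ h := by
    intro j hj
    have := chain j 0 (by omega)
    simpa using this
  have bndB : ∀ j : ℕ, j ≤ n → |f (a + (j:ℝ) * h) - f b| ≤ ((n:ℝ) - j) * Φ h := by
    intro j hj
    have hc := chain (n - j) j (by omega)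
    have e : j + (n - j) = n := by omega
    rw [e, hbeq, Nat.cast_sub hj] at hc
    rw [abs_sub_comm]
    exact hc
  have fab : |f b - f a| ≤ (n:ℝ) * Φ h := by
    have := bndA n le_rfl
    rwa [hbeq] at this
  -- Gauss sums
  have gauss1 : ∀ M : ℕ, ∑ i ∈ Ico 1 M, (i:ℝ) = M * ((M:ℝ) - 1) / 2 := by
    intro M
    induction M with
    | zero => simp
    | succ M ih =>
      rcases Nat.eq_zero_or_pos M with h0 | hpos
      · subst h0; simp
      · rw [Finset.sum_Ico_succ_top hpos, ih]; push_cast; ring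
  have gauss2 : ∀ M : ℕ, ∑ i ∈ Icc 1 M, (i:ℝ) = M * ((M:ℝ) + 1) / 2 := by
    intro M
    induction M with
    | zero => simp
    | succ M ih =>
      rw [Finset.sum_Icc_succ_top (by omega), ih]; push_cast; ring
  have c1 : ∑ i ∈ Ico 1 m, ((2*i : ℕ):ℝ) = (m:ℝ) * ((m:ℝ) - 1) := by
    push_cast
    rw [← Finset.mul_sum, gauss1 m]; ring
  have c2 : ∑ i ∈ Icc 1 m, ((2*i - 1 : ℕ):ℝ) = (m:ℝ) * m := by
    have e : ∀ i ∈ Icc 1 m, ((2*i - 1 : ℕ):ℝ) = 2 * (i:ℝ) - 1 := by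
      intro i hi
      have h1 : 1 ≤ i := (mem_Icc.1 hi).1
      rw [Nat.cast_sub (by omega)]; push_cast; ring
    rw [Finset.sum_congr rfl e, Finset.sum_sub_distrib, ← Finset.mul_sum, gauss2 m,
      Finset.sum_const, Nat.card_Icc]
    simp
    push_cast
    ring
  set S1 := ∑ i ∈ Ico 1 m, f (a + ((2*i : ℕ):ℝ) * h) with hS1
  set S2 := ∑ i ∈ Icc 1 m, f (a + ((2*i - 1 : ℕ):ℝ) * h) with hS2
  have cardIco : ((Ico 1 m).card : ℝ) = (m:ℝ) - 1 := by
    rw [Nat.card_Ico, Nat.cast_sub hm1]; simp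
  have cardIcc : ((Icc 1 m).card : ℝ) = (m:ℝ) := by
    rw [Nat.card_Icc]; simp
  have A1 : |S1 - ((m:ℝ) - 1) * f a| ≤ ((m:ℝ) * ((m:ℝ)-1)) * Φ h := by
    have e : S1 - ((m:ℝ)-1) * f a = ∑ i ∈ Ico 1 m, (f (a + ((2*i : ℕ):ℝ) * h) - f a) := by
      rw [Finset.sum_sub_distrib, Finset.sum_const, nsmul_eq_mul, cardIco]
    rw [e]
    calc |∑ i ∈ Ico 1 m, (f (a + ((2*i : ℕ):ℝ) * h) - f a)|
        ≤ ∑ i ∈ Ico 1 m, |f (a + ((2*i : ℕ):ℝ) * h) - f a| := Finset.abs_sum_le_sum_abs _ _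
      _ ≤ ∑ i ∈ Ico 1 m, ((2*i : ℕ):ℝ) * Φ h := by
          refine Finset.sum_le_sum fun i hi => bndA (2*i) ?_
          have := (mem_Ico.1 hi).2; omega
      _ = (∑ i ∈ Ico 1 m, ((2*i : ℕ):ℝ)) * Φ h := (Finset.sum_mul _ _ _).symm
      _ = ((m:ℝ) * ((m:ℝ)-1)) * Φ h := by rw [c1]
  have A2 : |S2 - (m:ℝ) * f a| ≤ ((m:ℝ) * m) * Φ h := by
    have e : S2 - (m:ℝ) * f a = ∑ i ∈ Icc 1 m, (f (a + ((2*i - 1 : ℕ):ℝ) * h) - f a) := by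
      rw [Finset.sum_sub_distrib, Finset.sum_const, nsmul_eq_mul, cardIcc]
    rw [e]
    calc |∑ i ∈ Icc 1 m, (f (a + ((2*i - 1 : ℕ):ℝ) * h) - f a)|
        ≤ ∑ i ∈ Icc 1 m, |f (a + ((2*i - 1 : ℕ):ℝ) * h) - f a| := Finset.abs_sum_le_sum_abs _ _
      _ ≤ ∑ i ∈ Icc 1 m, ((2*i - 1 : ℕ):ℝ) * Φ h := by
          refine Finset.sum_le_sum fun i hi => bndA (2*i - 1) ?_
          have := (mem_Icc.1 hi).2; omega
      _ = (∑ i ∈ Icc 1 m, ((2*i - 1 : ℕ):ℝ)) * Φ h := (Finset.sum_mul _ _ _).symm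
      _ = ((m:ℝ) * m) * Φ h := by rw [c2]
  have B1 : |S1 - ((m:ℝ) - 1) * f b| ≤ ((m:ℝ) * ((m:ℝ)-1)) * Φ h := by
    have e : S1 - ((m:ℝ)-1) * f b = ∑ i ∈ Ico 1 m, (f (a + ((2*i : ℕ):ℝ) * h) - f b) := by
      rw [Finset.sum_sub_distrib, Finset.sum_const, nsmul_eq_mul, cardIco]
    rw [e]
    calc |∑ i ∈ Ico 1 m, (f (a + ((2*i : ℕ):ℝ) * h) - f b)|
        ≤ ∑ i ∈ Ico 1 m, |f (a + ((2*i : ℕ):ℝ) * h) - f b| := Finset.abs_sum_le_sum_abs _ _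
      _ ≤ ∑ i ∈ Ico 1 m, ((n:ℝ) - ((2*i : ℕ):ℝ)) * Φ h := by
          refine Finset.sum_le_sum fun i hi => bndB (2*i) ?_
          have := (mem_Ico.1 hi).2; omega
      _ = (∑ i ∈ Ico 1 m, ((n:ℝ) - ((2*i : ℕ):ℝ))) * Φ h := (Finset.sum_mul _ _ _).symm
      _ = ((m:ℝ) * ((m:ℝ)-1)) * Φ h := by
          rw [Finset.sum_sub_distrib, Finset.sum_const, nsmul_eq_mul, cardIco, c1, hnm]; ring
  have B2 : |S2 - (m:ℝ) * f b| ≤ ((m:ℝ) * m) * Φ h := by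
    have e : S2 - (m:ℝ) * f b = ∑ i ∈ Icc 1 m, (f (a + ((2*i - 1 : ℕ):ℝ) * h) - f b) := by
      rw [Finset.sum_sub_distrib, Finset.sum_const, nsmul_eq_mul, cardIcc]
    rw [e]
    calc |∑ i ∈ Icc 1 m, (f (a + ((2*i - 1 : ℕ):ℝ) * h) - f b)|
        ≤ ∑ i ∈ Icc 1 m, |f (a + ((2*i - 1 : ℕ):ℝ) * h) - f b| := Finset.abs_sum_le_sum_abs _ _
      _ ≤ ∑ i ∈ Icc 1 m, ((n:ℝ) - ((2*i - 1 : ℕ):ℝ)) * Φ h := by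
          refine Finset.sum_le_sum fun i hi => bndB (2*i - 1) ?_
          have := (mem_Icc.1 hi).2; omega
      _ = (∑ i ∈ Icc 1 m, ((n:ℝ) - ((2*i - 1 : ℕ):ℝ))) * Φ h := (Finset.sum_mul _ _ _).symm
      _ = ((m:ℝ) * m) * Φ h := by
          rw [Finset.sum_sub_distrib, Finset.sum_const, nsmul_eq_mul, cardIcc, c2, hnm]; ring
  have AB : |f b - f a| ≤ (2*(m:ℝ)) * Φ h := by rw [← hnm] at *; exact fab
  have hm0 : (0:ℝ) < m := by exact_mod_cast hm1
  have h6m : (0:ℝ) < 6 * m := by linarith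
  have heq : (b - a) / (3 * (n:ℝ)) * ((f a + 2 * S1 + 4 * S2 + f b) / (b - a))
      = (f a + 2 * S1 + 4 * S2 + f b) / (6 * (m:ℝ)) := by
    rw [hnm]; field_simp; ring
  have hn2 : (n:ℝ) / 2 = (m:ℝ) := by rw [hnm]; ring
  obtain ⟨A1l, A1u⟩ := abs_le.1 A1
  obtain ⟨A2l, A2u⟩ := abs_le.1 A2
  obtain ⟨B1l, B1u⟩ := abs_le.1 B1
  obtain ⟨B2l, B2u⟩ := abs_le.1 B2
  obtain ⟨ABl, ABu⟩ := abs_le.1 AB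
  have k1 : f a - (m:ℝ) * Φ h ≤ (f a + 2 * S1 + 4 * S2 + f b) / (6 * (m:ℝ)) := by
    rw [le_div_iff₀ h6m]; linarith
  have k2 : f b - (m:ℝ) * Φ h ≤ (f a + 2 * S1 + 4 * S2 + f b) / (6 * (m:ℝ)) := by
    rw [le_div_iff₀ h6m]; linarith
  have k3 : (f a + 2 * S1 + 4 * S2 + f b) / (6 * (m:ℝ)) ≤ f a + (m:ℝ) * Φ h := by
    rw [div_le_iff₀ h6m]; linarith
  have k4 : (f a + 2 * S1 + 4 * S2 + f b) / (6 * (m:ℝ)) ≤ f b + (m:ℝ) * Φ h := by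
    rw [div_le_iff₀ h6m]; linarith
  rw [heq, hn2]
  constructor
  · rcases le_total (f a) (f b) with hle | hle
    · rw [max_eq_right hle]; linarith
    · rw [max_eq_left hle]; linarith
  · rcases le_total (f a) (f b) with hle | hle
    · rw [min_eq_left hle]; linarith
    · rw [min_eq_right hle]; linarith
end

section
/- Let f:[a,b]→ℝ be continuous and Φ-Hölder with Φ superadditive. Then for every even n ≥ 2, max{f(a), f(b)} − Φ(b−a)/2 ≤ S_n(f)/(b−a) ≤ min{f(a), f(b)} + Φ(b−a)/2, where S_n(f) is the composite Simpson sum. -/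
open Finset

lemma simpson_aux_upper
    (a b : ℝ) (hab : a < b) (f Φ : ℝ → ℝ)
    (hsuper : ∀ x y, 0 ≤ x → 0 ≤ y → x + y ≤ b - a → Φ x + Φ y ≤ Φ (x + y))
    (hhold : ∀ x ∈ Set.Icc a b, ∀ y ∈ Set.Icc a b, |f x - f y| ≤ Φ |x - y|)
    (n : ℕ) (hn : 2 ≤ n) (hne : Even n) :
    ((b - a) / (3 * n) * (f a + 2 * ∑ i ∈ Finset.Ico 1 (n / 2), f (a + (2 * i : ℕ) * (b - a) / n) + 4 * ∑ i ∈ Finset.Icc 1 (n / 2), f (a + (2 * i - 1 : ℕ) * (b - a) / n) + f b)) / (b - a) ≤ min (f a) (f b) + Φ (b - a) / 2 := by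
  have hba : (0:ℝ) < b - a := sub_pos.mpr hab
  obtain ⟨m, rfl⟩ := hne
  have hm : 1 ≤ m := by omega
  have hm2 : (m + m) / 2 = m := by omega
  rw [hm2]
  set c : ℕ → ℝ := fun j => a + (j : ℕ) * (b - a) / ((m + m : ℕ) : ℝ) with hc
  have hN : (0:ℝ) < ((m + m : ℕ) : ℝ) := by
    have : 0 < m + m := by omega
    exact_mod_cast this
  have hmem : ∀ j, j ≤ m + m → c j ∈ Set.Icc a b := by
    intro j hj
    have hjc : (j:ℝ) ≤ ((m+m:ℕ):ℝ) := by exact_mod_cast hj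
    constructor
    · have : 0 ≤ (j:ℝ) * (b - a) / ((m+m:ℕ):ℝ) :=
        div_nonneg (mul_nonneg (Nat.cast_nonneg j) hba.le) hN.le
      simp only [hc]; linarith
    · simp only [hc]
      have hle : (j:ℝ) * (b - a) / ((m+m:ℕ):ℝ) ≤ b - a := by
        rw [div_le_iff₀ hN]
        nlinarith [mul_le_mul_of_nonneg_right hjc hba.le]
      linarith
  have hpair : ∀ j, j ≤ m + m → c j + c (m + m - j) = a + b := by
    intro j hj
    simp only [hc]
    rw [Nat.cast_sub hj]
    field_simp
    ring
  have ha : a ∈ Set.Icc a b := ⟨le_refl a, hab.le⟩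
  have hb : b ∈ Set.Icc a b := ⟨hab.le, le_refl b⟩
  have hup : ∀ x ∈ Set.Icc a b, ∀ y ∈ Set.Icc a b, x + y = a + b →
      f x + f y ≤ 2 * min (f a) (f b) + Φ (b - a) := by
    intro x hx y hy hxy
    obtain ⟨hx1, hx2⟩ := hx
    obtain ⟨hy1, hy2⟩ := hy
    have h1 : f x - f a ≤ Φ (x - a) := by
      have h := hhold x ⟨hx1, hx2⟩ a ha
      rw [show |x - a| = x - a from abs_of_nonneg (by linarith)] at h
      exact le_trans (le_abs_self _) h
    have h2 : f y - f a ≤ Φ (y - a) := by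
      have h := hhold y ⟨hy1, hy2⟩ a ha
      rw [show |y - a| = y - a from abs_of_nonneg (by linarith)] at h
      exact le_trans (le_abs_self _) h
    have hsa : Φ (x - a) + Φ (y - a) ≤ Φ (b - a) := by
      have h := hsuper (x - a) (y - a) (by linarith) (by linarith) (by linarith)
      have e : (x - a) + (y - a) = b - a := by linarith
      rwa [e] at h
    have h3 : f x - f b ≤ Φ (b - x) := by
      have h := hhold x ⟨hx1, hx2⟩ b hb
      rw [show |x - b| = b - x by rw [abs_sub_comm, abs_of_nonneg (by linarith)]] at h
      exact le_trans (le_abs_self _) h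
    have h4 : f y - f b ≤ Φ (b - y) := by
      have h := hhold y ⟨hy1, hy2⟩ b hb
      rw [show |y - b| = b - y by rw [abs_sub_comm, abs_of_nonneg (by linarith)]] at h
      exact le_trans (le_abs_self _) h
    have hsb : Φ (b - x) + Φ (b - y) ≤ Φ (b - a) := by
      have h := hsuper (b - x) (b - y) (by linarith) (by linarith) (by linarith)
      have e : (b - x) + (b - y) = b - a := by linarith
      rwa [e] at h
    rcases le_total (f a) (f b) with h | h
    · rw [min_eq_left h]; linarith
    · rw [min_eq_right h]; linarith
  set K : ℝ := 2 * min (f a) (f b) + Φ (b - a) with hK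
  have hK0 : f a + f b ≤ K := hup a ha b hb rfl
  -- even interior nodes
  have hre : ∑ i ∈ Finset.Ico 1 m, f (c (2*i)) = ∑ i ∈ Finset.Ico 1 m, f (c (2*(m-i))) := by
    apply Finset.sum_nbij' (fun i => m - i) (fun i => m - i)
    · intro i hi; simp only [Finset.mem_Ico] at *; omega
    · intro i hi; simp only [Finset.mem_Ico] at *; omega
    · intro i hi; simp only [Finset.mem_Ico] at hi; omega
    · intro i hi; simp only [Finset.mem_Ico] at hi; omega
    · intro i hi; simp only [Finset.mem_Ico] at hi
      congr 2
      omega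
  have hEven : (2:ℝ) * ∑ i ∈ Finset.Ico 1 m, f (c (2*i)) ≤ ((m:ℝ) - 1) * K := by
    have step : (2:ℝ) * ∑ i ∈ Finset.Ico 1 m, f (c (2*i))
        = ∑ i ∈ Finset.Ico 1 m, (f (c (2*i)) + f (c (2*(m-i)))) := by
      rw [Finset.sum_add_distrib, ← hre]; ring
    rw [step]
    calc ∑ i ∈ Finset.Ico 1 m, (f (c (2*i)) + f (c (2*(m-i))))
        ≤ ∑ _i ∈ Finset.Ico 1 m, K := by
          apply Finset.sum_le_sum
          intro i hi
          simp only [Finset.mem_Ico] at hi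
          have h1 : 2*i ≤ m + m := by omega
          have h2 : 2*(m-i) = m + m - 2*i := by omega
          apply hup _ (hmem _ h1) _ (hmem _ (by omega))
          rw [h2]
          exact hpair (2*i) h1
      _ = ((m:ℝ) - 1) * K := by
          rw [Finset.sum_const, Nat.card_Ico]
          have : ((m - 1 : ℕ) : ℝ) = (m:ℝ) - 1 := by
            rw [Nat.cast_sub hm]; norm_num
          rw [nsmul_eq_mul, this]
  -- odd nodes
  have hro : ∑ i ∈ Finset.Icc 1 m, f (c (2*i-1)) = ∑ i ∈ Finset.Icc 1 m, f (c (2*(m-i)+1)) := by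
    apply Finset.sum_nbij' (fun i => m + 1 - i) (fun i => m + 1 - i)
    · intro i hi; simp only [Finset.mem_Icc] at *; omega
    · intro i hi; simp only [Finset.mem_Icc] at *; omega
    · intro i hi; simp only [Finset.mem_Icc] at hi; omega
    · intro i hi; simp only [Finset.mem_Icc] at hi; omega
    · intro i hi; simp only [Finset.mem_Icc] at hi
      congr 2
      omega
  have hOdd : (2:ℝ) * ∑ i ∈ Finset.Icc 1 m, f (c (2*i-1)) ≤ (m:ℝ) * K := by
    have step : (2:ℝ) * ∑ i ∈ Finset.Icc 1 m, f (c (2*i-1))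
        = ∑ i ∈ Finset.Icc 1 m, (f (c (2*i-1)) + f (c (2*(m-i)+1))) := by
      rw [Finset.sum_add_distrib, ← hro]; ring
    rw [step]
    calc ∑ i ∈ Finset.Icc 1 m, (f (c (2*i-1)) + f (c (2*(m-i)+1)))
        ≤ ∑ _i ∈ Finset.Icc 1 m, K := by
          apply Finset.sum_le_sum
          intro i hi
          simp only [Finset.mem_Icc] at hi
          have h1 : 2*i-1 ≤ m + m := by omega
          have h2 : 2*(m-i)+1 = m + m - (2*i-1) := by omega
          apply hup _ (hmem _ h1) _ (hmem _ (by omega))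
          rw [h2]
          exact hpair (2*i-1) h1
      _ = (m:ℝ) * K := by
          rw [Finset.sum_const, Nat.card_Icc]
          simp [nsmul_eq_mul]
  -- fold goal sums into c
  have hfold1 : ∀ i : ℕ, a + ((2*i : ℕ):ℝ) * (b - a) / ((m+m:ℕ):ℝ) = c (2*i) := fun i => rfl
  have hfold2 : ∀ i : ℕ, a + ((2*i-1 : ℕ):ℝ) * (b - a) / ((m+m:ℕ):ℝ) = c (2*i-1) := fun i => rfl
  simp only [hfold1, hfold2]
  set E := ∑ i ∈ Finset.Ico 1 m, f (c (2*i)) with hE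
  set O := ∑ i ∈ Finset.Icc 1 m, f (c (2*i-1)) with hO
  have hT : f a + 2*E + 4*O + f b ≤ 3*(m:ℝ)*K := by linarith
  have hmpos : (0:ℝ) < (m:ℝ) := by exact_mod_cast hm
  rw [div_le_iff₀ hba]
  have hNc : ((m+m:ℕ):ℝ) = (m:ℝ) + (m:ℝ) := by push_cast; ring
  rw [hNc]
  have h1 : (b - a) / (3 * ((m:ℝ) + m)) * (f a + 2*E + 4*O + f b)
      ≤ (b - a) / (3 * ((m:ℝ) + m)) * (3*(m:ℝ)*K) := by
    apply mul_le_mul_of_nonneg_left hT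
    positivity
  have h2 : (b - a) / (3 * ((m:ℝ) + m)) * (3*(m:ℝ)*K)
      = (min (f a) (f b) + Φ (b - a) / 2) * (b - a) := by
    rw [hK]
    field_simp
    ring
  linarith

theorem simpson_phi_holder_superadditive
    (a b : ℝ) (hab : a < b) (f Φ : ℝ → ℝ)
    (hΦ : ∀ t ∈ Set.Icc (0 : ℝ) (b - a), 0 ≤ Φ t)
    (hsuper : ∀ x y, 0 ≤ x → 0 ≤ y → x + y ≤ b - a → Φ x + Φ y ≤ Φ (x + y))
    (hf : ContinuousOn f (Set.Icc a b))
    (hhold : ∀ x ∈ Set.Icc a b, ∀ y ∈ Set.Icc a b, |f x - f y| ≤ Φ |x - y|)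
    (n : ℕ) (hn : 2 ≤ n) (hne : Even n) :
    max (f a) (f b) - Φ (b - a) / 2 ≤ ((b - a) / (3 * n) * (f a + 2 * ∑ i ∈ Finset.Ico 1 (n / 2), f (a + (2 * i : ℕ) * (b - a) / n) + 4 * ∑ i ∈ Finset.Icc 1 (n / 2), f (a + (2 * i - 1 : ℕ) * (b - a) / n) + f b)) / (b - a) ∧
    ((b - a) / (3 * n) * (f a + 2 * ∑ i ∈ Finset.Ico 1 (n / 2), f (a + (2 * i : ℕ) * (b - a) / n) + 4 * ∑ i ∈ Finset.Icc 1 (n / 2), f (a + (2 * i - 1 : ℕ) * (b - a) / n) + f b)) / (b - a) ≤ min (f a) (f b) + Φ (b - a) / 2 := by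
  constructor
  · have hhold' : ∀ x ∈ Set.Icc a b, ∀ y ∈ Set.Icc a b, |(-f x) - (-f y)| ≤ Φ |x - y| := by
      intro x hx y hy
      rw [show (-f x) - (-f y) = -(f x - f y) by ring, abs_neg]
      exact hhold x hx y hy
    have h := simpson_aux_upper a b hab (fun x => -f x) Φ hsuper hhold' n hn hne
    simp only [min_neg_neg] at h
    set E := ∑ i ∈ Finset.Ico 1 (n / 2), f (a + (2 * i : ℕ) * (b - a) / n) with hE
    set O := ∑ i ∈ Finset.Icc 1 (n / 2), f (a + (2 * i - 1 : ℕ) * (b - a) / n) with hO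
    rw [show (∑ i ∈ Finset.Ico 1 (n / 2), -f (a + (2 * i : ℕ) * (b - a) / n)) = -E by
      rw [hE, ← Finset.sum_neg_distrib]] at h
    rw [show (∑ i ∈ Finset.Icc 1 (n / 2), -f (a + (2 * i - 1 : ℕ) * (b - a) / n)) = -O by
      rw [hO, ← Finset.sum_neg_distrib]] at h
    have heq : (b - a) / (3 * (n:ℝ)) * (-f a + 2 * -E + 4 * -O + -f b) / (b - a)
        = -((b - a) / (3 * (n:ℝ)) * (f a + 2 * E + 4 * O + f b) / (b - a)) := by
      ring
    rw [heq] at h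
    linarith
  · exact simpson_aux_upper a b hab f Φ hsuper hhold n hn hne
end

section
/- Let f:[a,b]→ℝ be continuous and Φ-monotone. Then for every n ∈ ℕ that is a positive multiple of 3, the composite Simpson 3/8 sum S38_n(f) := (3(b−a)/(8n))·∑_{i=1}^{n/3} [f(x_{3i−3}) + 3f(x_{3i−2}) + 3f(x_{3i−1}) + f(x_{3i})] satisfies f(a) − (n/2)·Φ((b−a)/n) ≤ S38_n(f)/(b−a) ≤ f(b) + (n/2)·Φ((b−a)/n). -/
open Finset

private lemma sumw (m : ℕ) : ∑ i ∈ Finset.Icc 1 m, ((24 * (i : ℝ)) - 12) = 12 * (m : ℝ) ^ 2 := by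
  induction m with
  | zero => simp
  | succ k ih =>
    rw [Finset.sum_Icc_succ_top (by omega), ih]
    push_cast; ring

theorem simpson38_phi_monotone
    (a b : ℝ) (hab : a < b) (f Φ : ℝ → ℝ)
    (hΦ : ∀ t ∈ Set.Icc (0 : ℝ) (b - a), 0 ≤ Φ t)
    (hf : ContinuousOn f (Set.Icc a b))
    (hmono : ∀ x y, a ≤ x → x < y → y ≤ b → f x ≤ f y + Φ (y - x))
    (n : ℕ) (hn : 1 ≤ n) (hn3 : 3 ∣ n) :
    f a - (n / 2 : ℝ) * Φ ((b - a) / n) ≤ (3 * (b - a) / (8 * n) * ∑ i ∈ Finset.Icc 1 (n / 3), (f (a + (3 * i - 3 : ℕ) * (b - a) / n) + 3 * f (a + (3 * i - 2 : ℕ) * (b - a) / n) + 3 * f (a + (3 * i - 1 : ℕ) * (b - a) / n) + f (a + (3 * i : ℕ) * (b - a) / n))) / (b - a) ∧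
    (3 * (b - a) / (8 * n) * ∑ i ∈ Finset.Icc 1 (n / 3), (f (a + (3 * i - 3 : ℕ) * (b - a) / n) + 3 * f (a + (3 * i - 2 : ℕ) * (b - a) / n) + 3 * f (a + (3 * i - 1 : ℕ) * (b - a) / n) + f (a + (3 * i : ℕ) * (b - a) / n))) / (b - a) ≤ f b + (n / 2 : ℝ) * Φ ((b - a) / n) := by
  have hba : (0:ℝ) < b - a := by linarith
  have hnR : (0:ℝ) < (n:ℝ) := by exact_mod_cast Nat.pos_of_ne_zero (by omega)
  set h : ℝ := (b - a) / n with hh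
  have hpos : 0 < h := div_pos hba hnR
  have hnh : (n:ℝ) * h = b - a := by
    rw [hh]; field_simp
  have hΦh : 0 ≤ Φ h := by
    apply hΦ
    constructor
    · exact le_of_lt hpos
    · rw [hh, div_le_iff₀ hnR]
      nlinarith [hnR, hba, (show (1:ℝ) ≤ (n:ℝ) by exact_mod_cast hn)]
  -- step inequality
  have step : ∀ j : ℕ, j + 1 ≤ n → f (a + j * h) ≤ f (a + (j + 1 : ℕ) * h) + Φ h := by
    intro j hj
    have h1 : a ≤ a + j * h := by
      have : (0:ℝ) ≤ j * h := by positivity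
      linarith
    have h2 : a + (j:ℝ) * h < a + ((j:ℕ) + 1 : ℕ) * h := by
      push_cast
      nlinarith
    have h3 : a + ((j:ℕ) + 1 : ℕ) * h ≤ b := by
      have hj' : ((j:ℝ) + 1) ≤ (n:ℝ) := by exact_mod_cast hj
      push_cast
      nlinarith
    have := hmono (a + j * h) (a + (j + 1 : ℕ) * h) h1 h2 h3
    have harg : (a + ((j:ℕ) + 1 : ℕ) * h) - (a + (j:ℝ) * h) = h := by push_cast; ring
    rwa [harg] at this
  -- lower bound at nodes
  have low : ∀ j : ℕ, j ≤ n → f a - j * Φ h ≤ f (a + j * h) := by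
    intro j
    induction j with
    | zero => intro _; simp
    | succ k ih =>
      intro hk
      have ih' := ih (by omega)
      have hs := step k (by omega)
      push_cast at ih' hs ⊢
      linarith
  -- upper bound at nodes
  have upp : ∀ k : ℕ, ∀ j : ℕ, j + k = n → f (a + j * h) ≤ f b + k * Φ h := by
    intro k
    induction k with
    | zero =>
      intro j hj
      have : a + (j:ℝ) * h = b := by
        have : (j:ℝ) = (n:ℝ) := by exact_mod_cast (by omega : j = n)
        rw [this]; linarith [hnh]
      rw [this]; simp
    | succ k ih =>
      intro j hj
      have hs := step j (by omega)
      have ih' := ih (j + 1) (by omega)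
      push_cast at hs ih' ⊢
      linarith
  obtain ⟨m, hm⟩ := hn3
  have hm3 : n / 3 = m := by omega
  have hmR : (n:ℝ) = 3 * (m:ℝ) := by exact_mod_cast (by omega : n = 3 * m)
  set S := ∑ i ∈ Finset.Icc 1 (n / 3), (f (a + (3 * i - 3 : ℕ) * (b - a) / n) + 3 * f (a + (3 * i - 2 : ℕ) * (b - a) / n) + 3 * f (a + (3 * i - 1 : ℕ) * (b - a) / n) + f (a + (3 * i : ℕ) * (b - a) / n)) with hS
  have hnode : ∀ j : ℕ, (j:ℝ) * (b - a) / n = (j:ℝ) * h := by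
    intro j; rw [hh]; ring
  -- lower bound on S
  have hSlow : 8 * (m:ℝ) * f a - 12 * (m:ℝ)^2 * Φ h ≤ S := by
    have key : ∀ i ∈ Finset.Icc 1 m,
        8 * f a - ((24 * (i:ℝ)) - 12) * Φ h ≤
        (f (a + (3 * i - 3 : ℕ) * (b - a) / n) + 3 * f (a + (3 * i - 2 : ℕ) * (b - a) / n) + 3 * f (a + (3 * i - 1 : ℕ) * (b - a) / n) + f (a + (3 * i : ℕ) * (b - a) / n)) := by
      intro i hi
      simp only [Finset.mem_Icc] at hi
      have l1 := low (3 * i - 3) (by omega)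
      have l2 := low (3 * i - 2) (by omega)
      have l3 := low (3 * i - 1) (by omega)
      have l4 := low (3 * i) (by omega)
      have c1 : ((3 * i - 3 : ℕ) : ℝ) = 3 * (i:ℝ) - 3 := by
        have : (3:ℕ) ≤ 3 * i := by omega
        push_cast [this]; ring
      have c2 : ((3 * i - 2 : ℕ) : ℝ) = 3 * (i:ℝ) - 2 := by
        have : (2:ℕ) ≤ 3 * i := by omega
        push_cast [this]; ring
      have c3 : ((3 * i - 1 : ℕ) : ℝ) = 3 * (i:ℝ) - 1 := by
        have : (1:ℕ) ≤ 3 * i := by omega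
        push_cast [this]; ring
      rw [hnode, hnode, hnode, hnode, c1, c2, c3]
      rw [c1] at l1; rw [c2] at l2; rw [c3] at l3
      push_cast at l4 ⊢
      linarith
    have := Finset.sum_le_sum key
    rw [hS, hm3]
    calc 8 * (m:ℝ) * f a - 12 * (m:ℝ)^2 * Φ h
        = ∑ i ∈ Finset.Icc 1 m, (8 * f a - ((24 * (i:ℝ)) - 12) * Φ h) := by
          rw [Finset.sum_sub_distrib, Finset.sum_const, ← Finset.sum_mul, sumw,
            Nat.card_Icc]
          simp
          ring
      _ ≤ _ := this
  -- upper bound on S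
  have hSupp : S ≤ 8 * (m:ℝ) * f b + 12 * (m:ℝ)^2 * Φ h := by
    have key : ∀ i ∈ Finset.Icc 1 m,
        (f (a + (3 * i - 3 : ℕ) * (b - a) / n) + 3 * f (a + (3 * i - 2 : ℕ) * (b - a) / n) + 3 * f (a + (3 * i - 1 : ℕ) * (b - a) / n) + f (a + (3 * i : ℕ) * (b - a) / n)) ≤
        8 * f b + ((24 * ((m:ℝ) - (i:ℝ))) + 12) * Φ h := by
      intro i hi
      simp only [Finset.mem_Icc] at hi
      have u1 := upp (n - (3 * i - 3)) (3 * i - 3) (by omega)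
      have u2 := upp (n - (3 * i - 2)) (3 * i - 2) (by omega)
      have u3 := upp (n - (3 * i - 1)) (3 * i - 1) (by omega)
      have u4 := upp (n - 3 * i) (3 * i) (by omega)
      have c1 : ((3 * i - 3 : ℕ) : ℝ) = 3 * (i:ℝ) - 3 := by
        have : (3:ℕ) ≤ 3 * i := by omega
        push_cast [this]; ring
      have c2 : ((3 * i - 2 : ℕ) : ℝ) = 3 * (i:ℝ) - 2 := by
        have : (2:ℕ) ≤ 3 * i := by omega
        push_cast [this]; ring
      have c3 : ((3 * i - 1 : ℕ) : ℝ) = 3 * (i:ℝ) - 1 := by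
        have : (1:ℕ) ≤ 3 * i := by omega
        push_cast [this]; ring
      have d1 : ((n - (3 * i - 3) : ℕ) : ℝ) = 3 * (m:ℝ) - (3 * (i:ℝ) - 3) := by
        have h1 : (3 * i - 3 : ℕ) ≤ n := by omega
        have h2 : (3:ℕ) ≤ 3 * i := by omega
        push_cast [h1, h2]
        rw [hmR]
      have d2 : ((n - (3 * i - 2) : ℕ) : ℝ) = 3 * (m:ℝ) - (3 * (i:ℝ) - 2) := by
        have h1 : (3 * i - 2 : ℕ) ≤ n := by omega
        have h2 : (2:ℕ) ≤ 3 * i := by omega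
        push_cast [h1, h2]
        rw [hmR]
      have d3 : ((n - (3 * i - 1) : ℕ) : ℝ) = 3 * (m:ℝ) - (3 * (i:ℝ) - 1) := by
        have h1 : (3 * i - 1 : ℕ) ≤ n := by omega
        have h2 : (1:ℕ) ≤ 3 * i := by omega
        push_cast [h1, h2]
        rw [hmR]
      have d4 : ((n - 3 * i : ℕ) : ℝ) = 3 * (m:ℝ) - 3 * (i:ℝ) := by
        have h1 : (3 * i : ℕ) ≤ n := by omega
        push_cast [h1]
        rw [hmR]
      rw [hnode, hnode, hnode, hnode, c1, c2, c3]
      rw [c1, d1] at u1; rw [c2, d2] at u2; rw [c3, d3] at u3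
      rw [d4] at u4
      push_cast at u4 ⊢
      linarith
    have h2 := Finset.sum_le_sum key
    have sum_eq : ∑ i ∈ Finset.Icc 1 m, (8 * f b + ((24 * ((m:ℝ) - (i:ℝ))) + 12) * Φ h)
        = 8 * (m:ℝ) * f b + 12 * (m:ℝ)^2 * Φ h := by
      have e : ∀ i ∈ Finset.Icc 1 m, (8 * f b + ((24 * ((m:ℝ) - (i:ℝ))) + 12) * Φ h)
          = (8 * f b + 24 * (m:ℝ) * Φ h) - ((24 * (i:ℝ)) - 12) * Φ h := by
        intro i _; ring
      rw [Finset.sum_congr rfl e, Finset.sum_sub_distrib, Finset.sum_const,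
        ← Finset.sum_mul, sumw, Nat.card_Icc]
      simp
      ring
    rw [sum_eq] at h2
    rw [hS, hm3]
    exact h2
  -- finish
  have hdiv : (3 * (b - a) / (8 * n) * S) / (b - a) = 3 * S / (8 * (n:ℝ)) := by
    field_simp
  constructor
  · rw [hdiv, le_div_iff₀ (by positivity : (0:ℝ) < 8 * (n:ℝ))]
    rw [hmR]
    nlinarith [hSlow]
  · rw [hdiv, div_le_iff₀ (by positivity : (0:ℝ) < 8 * (n:ℝ))]
    rw [hmR]
    nlinarith [hSupp]
end

section
/- Let f:[a,b]→ℝ be continuous and Φ-Hölder. Then for every n ∈ ℕ that is a positive multiple of 3, max{f(a), f(b)} − (n/2)·Φ((b−a)/n) ≤ S38_n(f)/(b−a) ≤ min{f(a), f(b)} + (n/2)·Φ((b−a)/n), where S38_n(f) is the composite Simpson 3/8 sum. -/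
open Finset

lemma simpson38_sumlin (c : ℝ) (m : ℕ) :
    ∑ i ∈ Finset.Icc 1 m, ((24 * (i : ℝ) - 12) * c) = 12 * m ^ 2 * c := by
  induction m with
  | zero => simp
  | succ k ih => rw [Finset.sum_Icc_succ_top (by omega), ih]; push_cast; ring

theorem simpson38_phi_holder
    (a b : ℝ) (hab : a < b) (f Φ : ℝ → ℝ)
    (hΦ : ∀ t ∈ Set.Icc (0 : ℝ) (b - a), 0 ≤ Φ t)
    (hf : ContinuousOn f (Set.Icc a b))
    (hhold : ∀ x ∈ Set.Icc a b, ∀ y ∈ Set.Icc a b, |f x - f y| ≤ Φ |x - y|)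
    (n : ℕ) (hn : 1 ≤ n) (hn3 : 3 ∣ n) :
    max (f a) (f b) - (n / 2 : ℝ) * Φ ((b - a) / n) ≤ (3 * (b - a) / (8 * n) * ∑ i ∈ Finset.Icc 1 (n / 3), (f (a + (3 * i - 3 : ℕ) * (b - a) / n) + 3 * f (a + (3 * i - 2 : ℕ) * (b - a) / n) + 3 * f (a + (3 * i - 1 : ℕ) * (b - a) / n) + f (a + (3 * i : ℕ) * (b - a) / n))) / (b - a) ∧
    (3 * (b - a) / (8 * n) * ∑ i ∈ Finset.Icc 1 (n / 3), (f (a + (3 * i - 3 : ℕ) * (b - a) / n) + 3 * f (a + (3 * i - 2 : ℕ) * (b - a) / n) + 3 * f (a + (3 * i - 1 : ℕ) * (b - a) / n) + f (a + (3 * i : ℕ) * (b - a) / n))) / (b - a) ≤ min (f a) (f b) + (n / 2 : ℝ) * Φ ((b - a) / n) := by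
  obtain ⟨m, hm⟩ := hn3
  have hm1 : 1 ≤ m := by omega
  have hba : (0:ℝ) < b - a := sub_pos.mpr hab
  have hnR : (0:ℝ) < (n:ℝ) := by exact_mod_cast hn
  have hmn : n / 3 = m := by omega
  set x : ℕ → ℝ := fun j => a + j * (b - a) / n with hxdef
  set c := Φ ((b - a) / n) with hcdef
  have hn1R : (1:ℝ) ≤ (n:ℝ) := by exact_mod_cast hn
  have hc : 0 ≤ c := by
    apply hΦ
    constructor
    · positivity
    · rw [div_le_iff₀ hnR]
      nlinarith [hba, hn1R]
  have hxmem : ∀ j, j ≤ n → x j ∈ Set.Icc a b := by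
    intro j hj
    have hjR : (j:ℝ) ≤ n := by exact_mod_cast hj
    constructor
    · simp only [x]
      have : 0 ≤ (j:ℝ) * (b - a) / n := by positivity
      linarith
    · simp only [x]
      have h1 : (j:ℝ) * (b - a) / n ≤ (n:ℝ) * (b - a) / n := by gcongr
      have h2 : (n:ℝ) * (b - a) / n = b - a := by field_simp
      linarith
  have hstep : ∀ j, j + 1 ≤ n → |f (x (j + 1)) - f (x j)| ≤ c := by
    intro j hj
    have h1 := hhold (x (j + 1)) (hxmem _ hj) (x j) (hxmem j (by omega))
    have hd : |x (j + 1) - x j| = (b - a) / n := by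
      have : x (j + 1) - x j = (b - a) / n := by
        simp only [x]; push_cast; field_simp; ring
      rw [this, abs_of_pos (by positivity)]
    rwa [hd] at h1
  have hkey : ∀ d j, j + d ≤ n → |f (x (j + d)) - f (x j)| ≤ d * c := by
    intro d
    induction d with
    | zero => intro j hj; simp
    | succ k ih =>
      intro j hj
      have h1 := ih j (by omega)
      have h2 := hstep (j + k) (by omega)
      have h3 : j + (k + 1) = (j + k) + 1 := by omega
      rw [h3]
      calc |f (x (j + k + 1)) - f (x j)|
          ≤ |f (x (j + k + 1)) - f (x (j + k))| + |f (x (j + k)) - f (x j)| := abs_sub_le _ _ _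
        _ ≤ c + k * c := add_le_add h2 h1
        _ = ((k + 1 : ℕ) : ℝ) * c := by push_cast; ring
  have hx0 : x 0 = a := by simp [x]
  have hxn : x n = b := by simp only [x]; field_simp; ring
  have ha_bound : ∀ j, j ≤ n → |f (x j) - f a| ≤ j * c := by
    intro j hj
    have := hkey j 0 (by omega)
    simpa [hx0] using this
  have hb_bound : ∀ j, j ≤ n → |f (x j) - f b| ≤ ((n : ℝ) - j) * c := by
    intro j hj
    have hk := hkey (n - j) j (by omega)
    rw [show j + (n - j) = n by omega, hxn] at hk
    rw [abs_sub_comm]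
    calc |f b - f (x j)| ≤ ((n - j : ℕ) : ℝ) * c := hk
      _ = ((n : ℝ) - j) * c := by rw [Nat.cast_sub hj]
  -- abbreviation for the sum
  set T := ∑ i ∈ Finset.Icc 1 (n / 3), (f (a + (3 * i - 3 : ℕ) * (b - a) / n) + 3 * f (a + (3 * i - 2 : ℕ) * (b - a) / n) + 3 * f (a + (3 * i - 1 : ℕ) * (b - a) / n) + f (a + (3 * i : ℕ) * (b - a) / n)) with hT
  have hterm : ∀ i ∈ Finset.Icc 1 m, ∀ v : ℝ, ∀ w : ℝ → ℝ, (∀ j : ℕ, j ≤ n → |f (x j) - v| ≤ w j * c) →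
      (∀ j : ℕ, j ≤ n → 0 ≤ w j) →
      |(f (x (3 * i - 3)) + 3 * f (x (3 * i - 2)) + 3 * f (x (3 * i - 1)) + f (x (3 * i))) - 8 * v|
        ≤ (w ((3 * i - 3 : ℕ)) + 3 * w ((3 * i - 2 : ℕ)) + 3 * w ((3 * i - 1 : ℕ)) + w ((3 * i : ℕ))) * c := by
    intro i hi v w hv hw
    simp only [Finset.mem_Icc] at hi
    have hi1 : 1 ≤ i := hi.1
    have him : i ≤ m := hi.2
    have h3i : 3 * i ≤ n := by omega
    have b0 := hv (3 * i - 3) (by omega)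
    have b1 := hv (3 * i - 2) (by omega)
    have b2 := hv (3 * i - 1) (by omega)
    have b3 := hv (3 * i) h3i
    have e : (f (x (3 * i - 3)) + 3 * f (x (3 * i - 2)) + 3 * f (x (3 * i - 1)) + f (x (3 * i))) - 8 * v
        = (f (x (3 * i - 3)) - v) + 3 * (f (x (3 * i - 2)) - v) + 3 * (f (x (3 * i - 1)) - v) + (f (x (3 * i)) - v) := by ring
    rw [e]
    calc |(f (x (3 * i - 3)) - v) + 3 * (f (x (3 * i - 2)) - v) + 3 * (f (x (3 * i - 1)) - v) + (f (x (3 * i)) - v)|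
        ≤ |f (x (3 * i - 3)) - v| + 3 * |f (x (3 * i - 2)) - v| + 3 * |f (x (3 * i - 1)) - v| + |f (x (3 * i)) - v| := by
          have a1 := abs_add_le ((f (x (3 * i - 3)) - v) + 3 * (f (x (3 * i - 2)) - v) + 3 * (f (x (3 * i - 1)) - v)) (f (x (3 * i)) - v)
          have a2 := abs_add_le ((f (x (3 * i - 3)) - v) + 3 * (f (x (3 * i - 2)) - v)) (3 * (f (x (3 * i - 1)) - v))
          have a3 := abs_add_le (f (x (3 * i - 3)) - v) (3 * (f (x (3 * i - 2)) - v))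
          have a4 : |3 * (f (x (3 * i - 2)) - v)| = 3 * |f (x (3 * i - 2)) - v| := by
            rw [abs_mul]; norm_num
          have a5 : |3 * (f (x (3 * i - 1)) - v)| = 3 * |f (x (3 * i - 1)) - v| := by
            rw [abs_mul]; norm_num
          rw [a4] at a3; rw [a5] at a2
          linarith
      _ ≤ w ((3 * i - 3 : ℕ)) * c + 3 * (w ((3 * i - 2 : ℕ)) * c) + 3 * (w ((3 * i - 1 : ℕ)) * c) + w ((3 * i : ℕ)) * c := by
          gcongr
      _ = (w ((3 * i - 3 : ℕ)) + 3 * w ((3 * i - 2 : ℕ)) + 3 * w ((3 * i - 1 : ℕ)) + w ((3 * i : ℕ))) * c := by ring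
  have hTrw : ∀ v : ℝ, T - (m : ℝ) * (8 * v) = ∑ i ∈ Finset.Icc 1 m,
      ((f (x (3 * i - 3)) + 3 * f (x (3 * i - 2)) + 3 * f (x (3 * i - 1)) + f (x (3 * i))) - 8 * v) := by
    intro v
    rw [Finset.sum_sub_distrib, Finset.sum_const, Nat.card_Icc, nsmul_eq_mul]
    rw [hT, hmn]
    simp only [x]
    push_cast [Nat.add_sub_cancel]
    ring
  have hmR : (n : ℝ) = 3 * (m : ℝ) := by exact_mod_cast hm
  have hmpos : (0:ℝ) < (m : ℝ) := by exact_mod_cast hm1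
  have hTv : ∀ v : ℝ, ∀ w : ℝ → ℝ, (∀ j : ℕ, j ≤ n → |f (x j) - v| ≤ w j * c) →
      (∀ j : ℕ, j ≤ n → 0 ≤ w j) →
      (∑ i ∈ Finset.Icc 1 m, ((w ((3 * i - 3 : ℕ)) + 3 * w ((3 * i - 2 : ℕ)) + 3 * w ((3 * i - 1 : ℕ)) + w ((3 * i : ℕ))) * c) = 12 * (m : ℝ) ^ 2 * c) →
      |T - (m : ℝ) * (8 * v)| ≤ 12 * (m : ℝ) ^ 2 * c := by
    intro v w hv hw hsum
    rw [hTrw v]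
    calc |∑ i ∈ Finset.Icc 1 m, ((f (x (3 * i - 3)) + 3 * f (x (3 * i - 2)) + 3 * f (x (3 * i - 1)) + f (x (3 * i))) - 8 * v)|
        ≤ ∑ i ∈ Finset.Icc 1 m, |(f (x (3 * i - 3)) + 3 * f (x (3 * i - 2)) + 3 * f (x (3 * i - 1)) + f (x (3 * i))) - 8 * v| :=
          Finset.abs_sum_le_sum_abs _ _
      _ ≤ ∑ i ∈ Finset.Icc 1 m, ((w ((3 * i - 3 : ℕ)) + 3 * w ((3 * i - 2 : ℕ)) + 3 * w ((3 * i - 1 : ℕ)) + w ((3 * i : ℕ))) * c) :=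
          Finset.sum_le_sum (fun i hi => hterm i hi v w hv hw)
      _ = 12 * (m : ℝ) ^ 2 * c := hsum
  have hcast : ∀ i : ℕ, 1 ≤ i → (((3 * i - 3 : ℕ) : ℝ) = 3 * i - 3 ∧ ((3 * i - 2 : ℕ) : ℝ) = 3 * i - 2 ∧ ((3 * i - 1 : ℕ) : ℝ) = 3 * i - 1) := by
    intro i hi
    refine ⟨?_, ?_, ?_⟩ <;> (rw [Nat.cast_sub (by omega)]; push_cast; ring)
  have hTa : |T - (m : ℝ) * (8 * f a)| ≤ 12 * (m : ℝ) ^ 2 * c := by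
    apply hTv (f a) (fun t => t)
    · intro j hj; exact ha_bound j hj
    · intro j hj; positivity
    · calc ∑ i ∈ Finset.Icc 1 m, ((((3 * i - 3 : ℕ) : ℝ) + 3 * ((3 * i - 2 : ℕ) : ℝ) + 3 * ((3 * i - 1 : ℕ) : ℝ) + ((3 * i : ℕ) : ℝ)) * c)
          = ∑ i ∈ Finset.Icc 1 m, ((24 * (i : ℝ) - 12) * c) := by
            apply Finset.sum_congr rfl
            intro i hi
            simp only [Finset.mem_Icc] at hi
            obtain ⟨e0, e1, e2⟩ := hcast i hi.1
            rw [e0, e1, e2]; push_cast; ring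
        _ = 12 * (m : ℝ) ^ 2 * c := simpson38_sumlin c m
  have hTb : |T - (m : ℝ) * (8 * f b)| ≤ 12 * (m : ℝ) ^ 2 * c := by
    apply hTv (f b) (fun t => (n : ℝ) - t)
    · intro j hj; exact hb_bound j hj
    · intro j hj
      have : (j : ℝ) ≤ n := by exact_mod_cast hj
      simp only [sub_nonneg]
      exact this
    · calc ∑ i ∈ Finset.Icc 1 m, ((((n : ℝ) - ((3 * i - 3 : ℕ) : ℝ)) + 3 * ((n : ℝ) - ((3 * i - 2 : ℕ) : ℝ)) + 3 * ((n : ℝ) - ((3 * i - 1 : ℕ) : ℝ)) + ((n : ℝ) - ((3 * i : ℕ) : ℝ))) * c)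
          = ∑ i ∈ Finset.Icc 1 m, ((24 * ((m + 1 - i : ℝ)) - 12) * c) := by
            apply Finset.sum_congr rfl
            intro i hi
            simp only [Finset.mem_Icc] at hi
            obtain ⟨e0, e1, e2⟩ := hcast i hi.1
            rw [e0, e1, e2, hmR]; push_cast; ring
        _ = ∑ i ∈ Finset.Icc 1 m, ((24 * (i : ℝ) - 12) * c) := by
            rw [← Finset.sum_nbij' (fun i => m + 1 - i) (fun i => m + 1 - i)]
            · intro i hi; simp only [Finset.mem_Icc] at *; omega
            · intro i hi; simp only [Finset.mem_Icc] at *; omega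
            · intro i hi; simp only [Finset.mem_Icc] at hi; omega
            · intro i hi; simp only [Finset.mem_Icc] at hi; omega
            · intro i hi
              simp only [Finset.mem_Icc] at hi
              have : ((m + 1 - i : ℕ) : ℝ) = (m : ℝ) + 1 - i := by
                rw [Nat.cast_sub (by omega)]; push_cast; ring
              rw [this]; ring
        _ = 12 * (m : ℝ) ^ 2 * c := simpson38_sumlin c m
  have hS : ∀ v : ℝ, |T - (m : ℝ) * (8 * v)| ≤ 12 * (m : ℝ) ^ 2 * c →
      |(3 * (b - a) / (8 * n) * T) / (b - a) - v| ≤ ((n : ℝ) / 2) * c := by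
    intro v h1
    have h2 : (3 * (b - a) / (8 * n) * T) / (b - a) - v
        = 3 / (8 * (n : ℝ)) * (T - (m : ℝ) * (8 * v)) := by
      rw [hmR]; field_simp
    rw [h2, abs_mul, abs_of_pos (by positivity : (0:ℝ) < 3 / (8 * (n:ℝ)))]
    calc 3 / (8 * (n : ℝ)) * |T - (m : ℝ) * (8 * v)| ≤ 3 / (8 * (n : ℝ)) * (12 * (m : ℝ) ^ 2 * c) := by
          gcongr
      _ = ((n : ℝ) / 2) * c := by rw [hmR]; field_simp; ring
  have hSa := abs_le.mp (hS (f a) hTa)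
  have hSb := abs_le.mp (hS (f b) hTb)
  constructor
  · rcases max_choice (f a) (f b) with h | h <;> rw [h] <;> [linarith [hSa.1]; linarith [hSb.1]]
  · rcases min_choice (f a) (f b) with h | h <;> rw [h] <;> [linarith [hSa.2]; linarith [hSb.2]]
end

section
/- Let f:[a,b]→ℝ be continuous and Φ-convex, i.e., f(tx+(1−t)y) ≤ t f(x) + (1−t) f(y) + t Φ((1−t)|y−x|) + (1−t) Φ(t|y−x|) for all x,y ∈ [a,b] and t ∈ [0,1]. Then for every n ∈ ℕ, n ≥ 1, T_n(f)/(b−a) ≤ (f(a)+f(b))/2 + ((n²−1)/6)·Φ((b−a)/n), where T_n(f) is the composite trapezoidal sum with n equal subintervals. -/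
open Finset

private lemma sum_range_id' (n : ℕ) : ∑ i ∈ range n, (i : ℝ) = n * (n - 1) / 2 := by
  induction n with
  | zero => simp
  | succ m ih => rw [Finset.sum_range_succ, ih]; push_cast; ring

private lemma sum_range_sq' (n : ℕ) : ∑ i ∈ range n, (i : ℝ) ^ 2 = n * (n - 1) * (2 * n - 1) / 6 := by
  induction n with
  | zero => simp
  | succ m ih => rw [Finset.sum_range_succ, ih]; push_cast; ring

private lemma max_principle (n : ℕ) (u : ℕ → ℝ) (hu0 : u 0 = 0) (hun : u n = 0)
    (hmid : ∀ i, i + 2 ≤ n → u (i + 1) - u i ≤ u (i + 2) - u (i + 1)) :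
    ∀ i ≤ n, u i ≤ 0 := by
  set D : ℕ → ℝ := fun j => u (j + 1) - u j with hD
  have hmono : ∀ j k, j ≤ k → k + 1 ≤ n → D j ≤ D k := by
    intro j k hjk hk
    induction k with
    | zero =>
      have : j = 0 := Nat.le_zero.mp hjk
      rw [this]
    | succ m ih =>
      rcases Nat.eq_or_lt_of_le hjk with h | h
      · rw [h]
      · exact le_trans (ih (by omega) (by omega)) (hmid m (by omega))
  intro i hi
  have htel : ∀ m, ∑ j ∈ range m, D j = u m - u 0 := fun m => Finset.sum_range_sub u m
  have hT : ∑ j ∈ range i, ∑ k ∈ Ico i n, (D j - D k) ≤ 0 := by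
    apply Finset.sum_nonpos
    intro j hj
    apply Finset.sum_nonpos
    intro k hk
    simp only [Finset.mem_range] at hj
    simp only [Finset.mem_Ico] at hk
    have := hmono j k (by omega) (by omega)
    linarith
  have hTeq : ∑ j ∈ range i, ∑ k ∈ Ico i n, (D j - D k) = (n : ℝ) * u i := by
    have h1 : ∑ k ∈ Ico i n, D k = u n - u i := by
      rw [Finset.sum_Ico_eq_sub _ hi, htel, htel]; ring
    have h2 : ∑ j ∈ range i, ∑ k ∈ Ico i n, (D j - D k) =
        ∑ j ∈ range i, ((n - i : ℕ) * D j - (u n - u i)) := by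
      apply Finset.sum_congr rfl
      intro j _
      rw [Finset.sum_sub_distrib, Finset.sum_const, Nat.card_Ico, h1, nsmul_eq_mul]
    rw [h2, Finset.sum_sub_distrib, ← Finset.mul_sum, htel, Finset.sum_const,
      Finset.card_range, nsmul_eq_mul, hu0, hun, Nat.cast_sub hi]
    ring
  rw [hTeq] at hT
  rcases Nat.eq_zero_or_pos n with h | h
  · have hi0 : i = 0 := by omega
    rw [hi0, hu0]
  · have : (0:ℝ) < n := by exact_mod_cast h
    nlinarith

theorem trapezoid_phi_convex_upper
    (a b : ℝ) (hab : a < b) (f Φ : ℝ → ℝ)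
    (hΦ : ∀ t ∈ Set.Icc (0 : ℝ) (b - a), 0 ≤ Φ t)
    (hf : ContinuousOn f (Set.Icc a b))
    (hconv : ∀ x ∈ Set.Icc a b, ∀ y ∈ Set.Icc a b, ∀ t ∈ Set.Icc (0:ℝ) 1, f (t * x + (1 - t) * y) ≤ t * f x + (1 - t) * f y + t * Φ ((1 - t) * |y - x|) + (1 - t) * Φ (t * |y - x|))
    (n : ℕ) (hn : 1 ≤ n) :
    ((b - a) / (2 * n) * (f a + 2 * ∑ i ∈ Finset.Ico 1 n, f (a + i * (b - a) / n) + f b)) / (b - a) ≤ (f a + f b) / 2 + (((n : ℝ) ^ 2 - 1) / 6) * Φ ((b - a) / n) := by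
  have hn0 : (0:ℝ) < n := by exact_mod_cast hn
  have hba : (0:ℝ) < b - a := by linarith
  set g : ℕ → ℝ := fun i => f (a + i * (b - a) / n) with hg
  have hmem : ∀ i ≤ n, a + (i:ℝ) * (b - a) / n ∈ Set.Icc a b := by
    intro i hi
    have hin : (i:ℝ) ≤ n := by exact_mod_cast hi
    constructor
    · have : 0 ≤ (i:ℝ) * (b - a) / n := by positivity
      linarith
    · have : (i:ℝ) * (b - a) / n ≤ b - a := by
        rw [div_le_iff₀ hn0]; nlinarith
      linarith
  -- midpoint inequality
  have hmid : ∀ i, i + 2 ≤ n → 2 * g (i + 1) ≤ g i + g (i + 2) + 2 * Φ ((b - a) / n) := by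
    intro i hi
    have hx := hmem i (by omega)
    have hy := hmem (i + 2) (by omega)
    have hc := hconv _ hx _ hy (1/2) (by norm_num)
    have habs : |(a + ((i:ℕ)+2:ℕ) * (b - a) / n) - (a + (i:ℝ) * (b - a) / n)| = 2 * ((b - a) / n) := by
      rw [abs_of_nonneg]
      · push_cast; ring
      · push_cast
        have h0 : 0 ≤ (b - a) / (n:ℝ) := by positivity
        have h2 : (a + ((i:ℝ)+2) * (b - a) / n) - (a + (i:ℝ) * (b - a) / n) = 2 * ((b - a) / n) := by
          ring
        linarith
    rw [habs] at hc
    have harg : (1/2 : ℝ) * (a + (i:ℝ) * (b - a) / n) + (1 - 1/2) * (a + ((i:ℕ)+2:ℕ) * (b - a) / n)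
        = a + ((i:ℕ)+1:ℕ) * (b - a) / n := by push_cast; field_simp; ring
    rw [harg] at hc
    have e1 : (1 - 1/2 : ℝ) * (2 * ((b - a) / n)) = (b - a) / n := by ring
    have e2 : (1/2 : ℝ) * (2 * ((b - a) / n)) = (b - a) / n := by ring
    rw [e1, e2] at hc
    simp only [hg]
    push_cast at hc ⊢
    linarith
  -- define u
  set u : ℕ → ℝ := fun i => g i - (((n:ℝ) - i) * g 0 + i * g n) / n - (i:ℝ) * ((n:ℝ) - i) * Φ ((b - a) / n) with hu
  have hu0 : u 0 = 0 := by simp only [hu]; push_cast; field_simp; ring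
  have hun : u n = 0 := by simp only [hu]; field_simp; ring
  have hule : ∀ i ≤ n, u i ≤ 0 := by
    apply max_principle n u hu0 hun
    intro i hi
    have h1 := hmid i hi
    have key : u i + u (i + 2) - 2 * u (i + 1) =
        g i + g (i + 2) - 2 * g (i + 1) + 2 * Φ ((b - a) / n) := by
      simp only [hu]; push_cast; field_simp; ring
    have h2 : 0 ≤ u i + u (i + 2) - 2 * u (i + 1) := by rw [key]; linarith
    linarith [h2]
  -- bound on each interior node
  have hnode : ∀ i ∈ Ico 1 n, g i ≤ (((n:ℝ) - i) * g 0 + i * g n) / n + (i:ℝ) * ((n:ℝ) - i) * Φ ((b - a) / n) := by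
    intro i hi
    simp only [Finset.mem_Ico] at hi
    have := hule i (by omega)
    simp only [hu] at this
    linarith
  -- compute g 0 and g n
  have hg0 : g 0 = f a := by simp [hg]
  have hgn : g n = f b := by
    simp only [hg]
    congr 1
    field_simp
    ring
  -- sum over interior nodes
  have hsum : ∑ i ∈ Ico 1 n, g i ≤ ((n:ℝ) - 1) * (f a + f b) / 2
      + ((n:ℝ) * ((n:ℝ)^2 - 1) / 6) * Φ ((b - a) / n) := by
    calc ∑ i ∈ Ico 1 n, g i
        ≤ ∑ i ∈ Ico 1 n, ((((n:ℝ) - i) * g 0 + i * g n) / n + (i:ℝ) * ((n:ℝ) - i) * Φ ((b - a) / n)) :=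
          Finset.sum_le_sum hnode
      _ = ∑ i ∈ Ico 1 n, (g 0 + ((g n - g 0) / n + (n:ℝ) * Φ ((b - a) / n)) * (i:ℝ)
            + (- Φ ((b - a) / n)) * (i:ℝ)^2) := by
          apply Finset.sum_congr rfl
          intro i _
          field_simp
          ring
      _ = ((n:ℝ) - 1) * (f a + f b) / 2 + ((n:ℝ) * ((n:ℝ)^2 - 1) / 6) * Φ ((b - a) / n) := by
          rw [Finset.sum_add_distrib, Finset.sum_add_distrib, Finset.sum_const, Nat.card_Ico,
            ← Finset.mul_sum, ← Finset.mul_sum]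
          have e1 : ∑ i ∈ Ico 1 n, (i:ℝ) = (n:ℝ) * ((n:ℝ) - 1) / 2 := by
            rw [Finset.sum_Ico_eq_sub _ hn, sum_range_id']
            push_cast
            ring
          have e2 : ∑ i ∈ Ico 1 n, (i:ℝ)^2 = (n:ℝ) * ((n:ℝ) - 1) * (2*(n:ℝ) - 1) / 6 := by
            rw [Finset.sum_Ico_eq_sub _ hn, sum_range_sq']
            push_cast
            ring
          rw [e1, e2, nsmul_eq_mul, Nat.cast_sub hn, hg0, hgn]
          push_cast
          field_simp
          ring
  -- final assembly
  have hE : ((b - a) / (2 * n) * (f a + 2 * ∑ i ∈ Finset.Ico 1 n, f (a + i * (b - a) / n) + f b)) / (b - a)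
      = (f a + 2 * ∑ i ∈ Ico 1 n, g i + f b) / (2 * n) := by
    simp only [hg]
    field_simp
  rw [hE, div_le_iff₀ (by positivity)]
  nlinarith [hsum]
end

section
/- Let f:[a,b]→ℝ be continuous and Φ-convex. Then for every even n ∈ ℕ, n ≥ 2, f((a+b)/2) − ((n²+2)/12)·Φ((b−a)/n) ≤ T_n(f)/(b−a), where T_n(f) is the composite trapezoidal sum with n equal subintervals. -/
open Finset

lemma sum_sq_real (m : ℕ) : ∑ j ∈ Finset.range (m+1), (j:ℝ)^2 = m*(m+1)*(2*m+1)/6 := by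
  induction m with
  | zero => simp
  | succ k ih =>
    rw [Finset.sum_range_succ, ih]
    push_cast
    ring

lemma discrete_key (m : ℕ) (hm : 1 ≤ m) (g : ℕ → ℝ) (P : ℝ)
    (hd : ∀ j, 1 ≤ j → j < 2*m → g j - (g (j-1) + g (j+1))/2 ≤ P) :
    g m - ((((2*m : ℕ) : ℝ))^2 + 2)/12 * P ≤
      (g 0 / 2 + ∑ j ∈ Finset.Ico 1 (2*m), g j + g (2*m)/2) / ((2*m : ℕ) : ℝ) := by
  set n := 2*m with hn
  have hn0 : (n:ℝ) ≠ 0 := Nat.cast_ne_zero.mpr (by omega)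
  set c : ℕ → ℝ := fun j => ((min j (n - j) : ℕ) : ℝ) - ((j * (n - j) : ℕ) : ℝ) / n with hc
  set d : ℕ → ℝ := fun j => g j - (g (j-1) + g (j+1))/2 with hdd
  -- closed forms
  have hc_le : ∀ j : ℕ, j ≤ m → c j = (j:ℝ)^2 / n := by
    intro j hj
    have h1 : min j (n - j) = j := by omega
    have h2 : ((j * (n - j) : ℕ) : ℝ) = j * ((n:ℝ) - j) := by
      push_cast [Nat.cast_sub (by omega : j ≤ n)]
      ring
    simp only [hc, h1, h2]
    field_simp
    ring
  have hc_ge : ∀ j : ℕ, m ≤ j → j ≤ n → c j = ((n:ℝ) - j)^2 / n := by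
    intro j hj hj2
    have h1 : min j (n - j) = n - j := by omega
    have h2 : ((j * (n - j) : ℕ) : ℝ) = j * ((n:ℝ) - j) := by
      push_cast [Nat.cast_sub (by omega : j ≤ n)]
      ring
    have h3 : ((n - j : ℕ) : ℝ) = (n:ℝ) - j := by
      push_cast [Nat.cast_sub hj2]
      ring
    simp only [hc, h1, h2, h3]
    field_simp
  have hc0 : c 0 = 0 := by simp [hc]
  have hcn : c n = 0 := by
    have := hc_ge n (by omega) le_rfl
    simpa using this
  have hcn1 : c (n+1) = 0 := by
    have h1 : n - (n+1) = 0 := by omega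
    simp [hc, h1]
    positivity
  -- nonnegativity
  have hc_nonneg : ∀ j : ℕ, j ≤ n → 0 ≤ c j := by
    intro j hj
    rcases le_or_gt j m with h | h
    · rw [hc_le j h]; positivity
    · rw [hc_ge j h.le hj]; positivity
  -- pointwise second-difference identity
  have hnR : ((n:ℝ)) = 2*m := by push_cast [hn]; ring
  have he : ∀ j : ℕ, j ≤ n →
      c j - c (j+1)/2 - c (j-1)/2
        = (if j = m then (1:ℝ) else 0) - (if j = 0 ∨ j = n then (1:ℝ)/2 else 1)/n := by
    intro j hj
    rcases eq_or_ne j 0 with rfl | hj0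
    · rw [hc0, hc_le 1 hm]
      rw [if_neg (by omega), if_pos (by omega)]
      push_cast
      field_simp
      ring
    rcases eq_or_ne j n with rfl | hjn
    · rw [hcn, hcn1, hc_ge (n-1) (by omega) (by omega)]
      rw [if_neg (by omega), if_pos (by omega)]
      have h3 : ((n - 1 : ℕ) : ℝ) = (n:ℝ) - 1 := by
        push_cast [Nat.cast_sub (by omega : 1 ≤ n)]; ring
      rw [h3]
      field_simp
      ring
    rcases lt_trichotomy j m with h | rfl | h
    · rw [hc_le j h.le, hc_le (j+1) (by omega), hc_le (j-1) (by omega),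
        if_neg (by omega), if_neg (by omega)]
      have h3 : ((j - 1 : ℕ) : ℝ) = (j:ℝ) - 1 := by
        push_cast [Nat.cast_sub (by omega : 1 ≤ j)]; ring
      rw [h3]
      push_cast
      field_simp
      ring
    · rw [hc_le j le_rfl, hc_le (j-1) (by omega), hc_ge (j+1) (by omega) (by omega),
        if_pos rfl, if_neg (by omega)]
      have h3 : ((j - 1 : ℕ) : ℝ) = (j:ℝ) - 1 := by
        push_cast [Nat.cast_sub (by omega : 1 ≤ j)]; ring
      rw [h3]
      rw [hnR]
      push_cast
      field_simp
      ring
    · rw [hc_ge j h.le (by omega), hc_ge (j+1) (by omega) (by omega),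
        hc_ge (j-1) (by omega) (by omega), if_neg (by omega), if_neg (by omega)]
      have h3 : ((j - 1 : ℕ) : ℝ) = (j:ℝ) - 1 := by
        push_cast [Nat.cast_sub (by omega : 1 ≤ j)]; ring
      rw [h3]
      push_cast
      field_simp
      ring
  -- sum of coefficients
  have hsum : ∑ j ∈ Finset.range (n+1), c j = (((n:ℝ))^2 + 2)/12 := by
    have hsplit : ∑ j ∈ Finset.range (n+1), c j
        = ∑ j ∈ Finset.range (m+1), c j + ∑ k ∈ Finset.range m, c (m+1+k) := by
      rw [show n + 1 = (m+1) + m by omega, Finset.sum_range_add]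
    have h1 : ∑ j ∈ Finset.range (m+1), c j = ∑ j ∈ Finset.range (m+1), (j:ℝ)^2/n :=
      Finset.sum_congr rfl (fun j hj => hc_le j (by simp at hj; omega))
    have h3 : ∑ k ∈ Finset.range m, c (m+1+k) = ∑ k ∈ Finset.range m, ((m-1-k : ℕ):ℝ)^2/n := by
      refine Finset.sum_congr rfl (fun k hk => ?_)
      simp only [Finset.mem_range] at hk
      rw [hc_ge (m+1+k) (by omega) (by omega)]
      congr 1
      rw [Nat.cast_sub (by omega : k ≤ m - 1), Nat.cast_sub (by omega : 1 ≤ m)]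
      push_cast [hnR]
      ring
    have h4 : ∑ k ∈ Finset.range m, ((m-1-k : ℕ):ℝ)^2/n = ∑ k ∈ Finset.range m, (k:ℝ)^2/n :=
      Finset.sum_range_reflect (fun j => ((j:ℝ))^2/(n:ℝ)) m
    rw [hsplit, h1, h3, h4]
    rcases Nat.exists_eq_succ_of_ne_zero (by omega : m ≠ 0) with ⟨k, hk⟩
    rw [hk, ← Finset.sum_div, ← Finset.sum_div, sum_sq_real, sum_sq_real, hnR, hk]
    push_cast
    field_simp
    ring
  -- shifted sums
  have hA : ∑ j ∈ Finset.range (n+1), c j * g (j-1) = ∑ j ∈ Finset.range (n+1), c (j+1) * g j := by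
    rw [Finset.sum_range_succ' (fun j => c j * g (j-1)) n, Finset.sum_range_succ]
    simp [hc0, hcn1]
  have hB : ∑ j ∈ Finset.range (n+1), c j * g (j+1) = ∑ j ∈ Finset.range (n+1), c (j-1) * g j := by
    have h1 := Finset.sum_range_succ' (fun j => c (j-1) * g j) (n+1)
    have h2 := Finset.sum_range_succ (fun j => c (j-1) * g j) (n+1)
    simp only [Nat.add_sub_cancel, Nat.zero_sub] at h1 h2
    rw [h2, hcn, hc0] at h1
    simp only [zero_mul, add_zero] at h1
    linarith [h1]
  have expand : ∑ j ∈ Finset.range (n+1), c j * d j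
      = ∑ j ∈ Finset.range (n+1), (c j - c (j+1)/2 - c (j-1)/2) * g j := by
    have e1 : ∑ j ∈ Finset.range (n+1), c j * d j
        = ∑ j ∈ Finset.range (n+1), (c j * g j - (c j * g (j-1))/2 - (c j * g (j+1))/2) :=
      Finset.sum_congr rfl (fun j _ => by simp only [hdd]; ring)
    have e2 : ∑ j ∈ Finset.range (n+1), (c j - c (j+1)/2 - c (j-1)/2) * g j
        = ∑ j ∈ Finset.range (n+1), (c j * g j - (c (j+1) * g j)/2 - (c (j-1) * g j)/2) :=
      Finset.sum_congr rfl (fun j _ => by ring)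
    rw [e1, e2, Finset.sum_sub_distrib, Finset.sum_sub_distrib, Finset.sum_sub_distrib,
      Finset.sum_sub_distrib, ← Finset.sum_div, ← Finset.sum_div, ← Finset.sum_div,
      ← Finset.sum_div, hA, hB]
  have hIdent : ∑ j ∈ Finset.range (n+1), c j * d j
      = g m - (g 0/2 + ∑ j ∈ Finset.Ico 1 n, g j + g n/2)/n := by
    rw [expand]
    have h1 : ∑ j ∈ Finset.range (n+1), (c j - c (j+1)/2 - c (j-1)/2) * g j
        = ∑ j ∈ Finset.range (n+1), ((if j = m then (1:ℝ) else 0) * g j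
            - ((if j = 0 ∨ j = n then (1:ℝ)/2 else 1) * g j)/n) := by
      refine Finset.sum_congr rfl (fun j hj => ?_)
      simp only [Finset.mem_range] at hj
      rw [he j (by omega)]
      ring
    rw [h1, Finset.sum_sub_distrib, ← Finset.sum_div]
    congr 1
    · simp only [ite_mul, one_mul, zero_mul]
      rw [Finset.sum_ite_eq']
      simp only [Finset.mem_range]
      rw [if_pos (by omega)]
    · congr 1
      have hins : Finset.range (n+1) = insert 0 (insert n (Finset.Ico 1 n)) := by
        ext x
        simp only [Finset.mem_range, Finset.mem_insert, Finset.mem_Ico]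
        omega
      rw [hins, Finset.sum_insert (by simp; omega), Finset.sum_insert (by simp)]
      rw [if_pos (Or.inl rfl), if_pos (Or.inr rfl)]
      have h2 : ∑ j ∈ Finset.Ico 1 n, (if j = 0 ∨ j = n then (1:ℝ)/2 else 1) * g j
          = ∑ j ∈ Finset.Ico 1 n, g j := by
        refine Finset.sum_congr rfl (fun j hj => ?_)
        simp only [Finset.mem_Ico] at hj
        rw [if_neg (by omega)]
        ring
      rw [h2]
      ring
  have hbound : ∑ j ∈ Finset.range (n+1), c j * d j ≤ (((n:ℝ))^2+2)/12 * P := by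
    rw [← hsum, Finset.sum_mul]
    refine Finset.sum_le_sum (fun j hj => ?_)
    simp only [Finset.mem_range] at hj
    rcases eq_or_ne j 0 with rfl | hj0
    · rw [hc0]; simp
    rcases eq_or_ne j n with rfl | hjn
    · rw [hcn]; simp
    · have hdj : d j ≤ P := hd j (by omega) (by omega)
      exact mul_le_mul_of_nonneg_left hdj (hc_nonneg j (by omega))
  linarith [hIdent, hbound]

theorem trapezoid_phi_convex_lower_even
    (a b : ℝ) (hab : a < b) (f Φ : ℝ → ℝ)
    (hΦ : ∀ t ∈ Set.Icc (0 : ℝ) (b - a), 0 ≤ Φ t)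
    (hf : ContinuousOn f (Set.Icc a b))
    (hconv : ∀ x ∈ Set.Icc a b, ∀ y ∈ Set.Icc a b, ∀ t ∈ Set.Icc (0:ℝ) 1, f (t * x + (1 - t) * y) ≤ t * f x + (1 - t) * f y + t * Φ ((1 - t) * |y - x|) + (1 - t) * Φ (t * |y - x|))
    (n : ℕ) (hn : 2 ≤ n) (hne : Even n) :
    f ((a + b) / 2) - (((n : ℝ) ^ 2 + 2) / 12) * Φ ((b - a) / n) ≤ ((b - a) / (2 * n) * (f a + 2 * ∑ i ∈ Finset.Ico 1 n, f (a + i * (b - a) / n) + f b)) / (b - a) := by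
  obtain ⟨m, hm2⟩ := hne
  have hnm : n = 2*m := by omega
  have hm1 : 1 ≤ m := by omega
  have hba : (0:ℝ) < b - a := sub_pos.mpr hab
  have hnpos : (0:ℝ) < (n:ℝ) := by exact_mod_cast Nat.pos_of_ne_zero (by omega)
  have hnn : (n:ℝ) ≠ 0 := ne_of_gt hnpos
  have hmem : ∀ k : ℕ, k ≤ n → a + (k:ℝ)*(b-a)/n ∈ Set.Icc a b := by
    intro k hk
    constructor
    · have : 0 ≤ (k:ℝ)*(b-a)/n := by positivity
      linarith
    · have hkn : (k:ℝ) ≤ n := Nat.cast_le.mpr hk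
      have h2 : (k:ℝ)*(b-a)/n ≤ b - a := by
        rw [div_le_iff₀ hnpos]
        nlinarith
      linarith
  have hd : ∀ j, 1 ≤ j → j < 2*m →
      (fun j : ℕ => f (a + (j:ℝ) * (b - a) / n)) j
        - ((fun j : ℕ => f (a + (j:ℝ) * (b - a) / n)) (j-1)
          + (fun j : ℕ => f (a + (j:ℝ) * (b - a) / n)) (j+1))/2 ≤ Φ ((b-a)/n) := by
    intro j hj1 hjn
    simp only []
    have hx := hmem (j+1) (by omega)
    have hy := hmem (j-1) (by omega)
    have key := hconv _ hx _ hy (1/2) (by constructor <;> norm_num)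
    have hcast : ((j-1:ℕ):ℝ) = (j:ℝ) - 1 := by
      rw [Nat.cast_sub hj1]; norm_num
    have e1 : (1/2 : ℝ) * (a + ((j+1:ℕ):ℝ) * (b-a)/n) + (1 - 1/2) * (a + ((j-1:ℕ):ℝ) * (b-a)/n)
        = a + (j:ℝ)*(b-a)/n := by
      rw [hcast]; push_cast; field_simp; ring
    have e2 : (a + ((j-1:ℕ):ℝ)*(b-a)/n) - (a + ((j+1:ℕ):ℝ)*(b-a)/n) = -(2*(b-a)/n) := by
      rw [hcast]; push_cast; field_simp; ring
    rw [e1, e2, abs_neg, abs_of_nonneg (by positivity)] at key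
    have e3 : (1 - 1/2 : ℝ) * (2*(b-a)/n) = (b-a)/n := by ring
    have e4 : (1/2 : ℝ) * (2*(b-a)/n) = (b-a)/n := by ring
    rw [e3, e4] at key
    linarith [key]
  have key := discrete_key m hm1 (fun j : ℕ => f (a + (j:ℝ) * (b - a) / n)) (Φ ((b-a)/n)) hd
  rw [← hnm] at key
  have em : a + (m:ℝ) * (b-a)/n = (a+b)/2 := by
    have : (n:ℝ) = 2*m := by rw [hnm]; push_cast; ring
    rw [this]
    have hm0 : (m:ℝ) ≠ 0 := Nat.cast_ne_zero.mpr (by omega)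
    field_simp
    ring
  have e0 : a + ((0:ℕ):ℝ) * (b-a)/n = a := by push_cast; ring
  have en : a + ((n:ℕ):ℝ) * (b-a)/n = b := by field_simp; ring
  rw [em, e0, en] at key
  have hrhs : ((b - a) / (2 * n) * (f a + 2 * ∑ i ∈ Finset.Ico 1 n, f (a + i * (b - a) / n) + f b)) / (b - a)
      = (f a / 2 + ∑ i ∈ Finset.Ico 1 n, f (a + i * (b - a) / n) + f b / 2) / n := by
    field_simp
  rw [hrhs]
  exact key
end

section
/- Let f:[a,b]→ℝ be continuous and Φ-convex. Then for every odd n ∈ ℕ, n ≥ 1, f((a+b)/2) − ((n²−1)/12)·Φ((b−a)/n) − Φ((b−a)/(2n)) ≤ T_n(f)/(b−a), where T_n(f) is the composite trapezoidal sum with n equal subintervals. -/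
open Finset

lemma sum_cast_id' (p : ℕ) : ∑ k ∈ Finset.range p, (k:ℝ) = p*(p-1)/2 := by
  induction p with
  | zero => simp
  | succ m ih => rw [Finset.sum_range_succ, ih]; push_cast; ring

lemma sum_kk1 (p : ℕ) : ∑ k ∈ Finset.range p, ((k:ℝ)*((k:ℝ)-1)) = p*(p-1)*(p-2)/3 := by
  induction p with
  | zero => simp
  | succ m ih => rw [Finset.sum_range_succ, ih]; push_cast; ring

lemma seq_lb (u : ℕ → ℝ) (K : ℝ) (p : ℕ)
    (hstep : ∀ k : ℕ, k + 2 ≤ p → u (k+1) ≤ (u k + u (k+2))/2 + K) :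
    ∀ k : ℕ, k ≤ p → u 0 + (k:ℝ) * (u 1 - u 0) - (k:ℝ)*((k:ℝ)-1)*K ≤ u k := by
  have hd : ∀ k : ℕ, k + 1 ≤ p → u 1 - u 0 - 2*(k:ℝ)*K ≤ u (k+1) - u k := by
    intro k
    induction k with
    | zero => intro _; simp
    | succ m ih =>
      intro hk
      have h1 := ih (by omega)
      have h2 := hstep m (by omega)
      push_cast
      linarith
  intro k
  induction k with
  | zero => intro _; simp
  | succ m ih =>
    intro hk
    have h1 := ih (by omega)
    have h2 := hd m (by omega)
    push_cast
    push_cast at h1 h2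
    nlinarith [h1, h2]

lemma key (F : ℝ → ℝ) (K : ℝ) (p : ℕ)
    (hstep : ∀ t : ℝ, 1 ≤ t → t ≤ 2*(p:ℝ) → F t ≤ (F (t-1) + F (t+1))/2 + K) :
    (2*(p:ℝ)+1) * ((F (p:ℝ) + F ((p:ℝ)+1)) - 2*(((p:ℝ)*((p:ℝ)+1))/3) * K) ≤
      F 0 + F (2*(p:ℝ)+1) + 2 * ∑ k ∈ Finset.range p, (F ((p:ℝ)-(k:ℝ)) + F ((p:ℝ)+1+(k:ℝ))) := by
  set u : ℕ → ℝ := fun k => F ((p:ℝ)-(k:ℝ)) + F ((p:ℝ)+1+(k:ℝ)) with hu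
  rcases Nat.eq_zero_or_pos p with hp0 | hp1
  · subst hp0
    norm_num
  · -- step for u
    have hstep' : ∀ k : ℕ, k + 2 ≤ p → u (k+1) ≤ (u k + u (k+2))/2 + 2*K := by
      intro k hk
      have hkR : (k:ℝ) + 2 ≤ (p:ℝ) := by exact_mod_cast hk
      have h1 := hstep ((p:ℝ) - ((k:ℝ)+1)) (by linarith) (by linarith)
      have h2 := hstep ((p:ℝ) + 1 + ((k:ℝ)+1)) (by linarith) (by linarith)
      simp only [hu]
      push_cast
      ring_nf
      ring_nf at h1 h2
      linarith
    have hε : u 0 ≤ u 1 + 4*K := by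
      have hpR : (1:ℝ) ≤ (p:ℝ) := by exact_mod_cast hp1
      have h1 := hstep (p:ℝ) (by linarith) (by linarith)
      have h2 := hstep ((p:ℝ)+1) (by linarith) (by linarith)
      simp only [hu]
      push_cast
      ring_nf
      ring_nf at h1 h2
      linarith
    have hlb := seq_lb u (2*K) p hstep'
    have c1 := hlb p le_rfl
    have c2 : ∑ k ∈ Finset.range p, (u 0 + (k:ℝ) * (u 1 - u 0) - (k:ℝ)*((k:ℝ)-1)*(2*K))
        ≤ ∑ k ∈ Finset.range p, u k :=
      Finset.sum_le_sum (fun k hk => hlb k (le_of_lt (Finset.mem_range.mp hk)))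
    rw [Finset.sum_sub_distrib, Finset.sum_add_distrib, ← Finset.sum_mul, ← Finset.sum_mul,
      Finset.sum_const, Finset.card_range, sum_cast_id', sum_kk1] at c2
    have hu0 : u 0 = F (p:ℝ) + F ((p:ℝ)+1) := by simp [hu]
    have hup : u p = F 0 + F (2*(p:ℝ)+1) := by
      simp only [hu, sub_self]
      rw [show (p:ℝ)+1+(p:ℝ) = 2*(p:ℝ)+1 by ring]
    have c3 : (p:ℝ)^2 * (u 0 - u 1) ≤ (p:ℝ)^2 * (4*K) :=
      mul_le_mul_of_nonneg_left (by linarith [hε]) (by positivity)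
    rw [nsmul_eq_mul] at c2
    rw [← hu0, ← hup]
    clear hu hstep' hε hlb
    clear_value u
    linarith [c1, c2, c3]

theorem trapezoid_phi_convex_lower_odd
    (a b : ℝ) (hab : a < b) (f Φ : ℝ → ℝ)
    (hΦ : ∀ t ∈ Set.Icc (0 : ℝ) (b - a), 0 ≤ Φ t)
    (hf : ContinuousOn f (Set.Icc a b))
    (hconv : ∀ x ∈ Set.Icc a b, ∀ y ∈ Set.Icc a b, ∀ t ∈ Set.Icc (0:ℝ) 1, f (t * x + (1 - t) * y) ≤ t * f x + (1 - t) * f y + t * Φ ((1 - t) * |y - x|) + (1 - t) * Φ (t * |y - x|))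
    (n : ℕ) (hn : 1 ≤ n) (hno : Odd n) :
    f ((a + b) / 2) - (((n : ℝ) ^ 2 - 1) / 12) * Φ ((b - a) / n) - Φ ((b - a) / (2 * n)) ≤
      ((b - a) / (2 * n) * (f a + 2 * ∑ i ∈ Finset.Ico 1 n, f (a + i * (b - a) / n) + f b)) / (b - a) := by
  obtain ⟨p, hp⟩ := hno
  subst hp
  have hba : (0:ℝ) < b - a := sub_pos.mpr hab
  have hN0 : (0:ℝ) < 2*(p:ℝ)+1 := by positivity
  push_cast
  set H : ℝ := (b-a)/(2*(p:ℝ)+1) with hH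
  have hH0 : 0 < H := by positivity
  have hNH : (2*(p:ℝ)+1) * H = b - a := by rw [hH]; field_simp
  set F : ℝ → ℝ := fun t => f (a + t * H) with hF
  have hmem : ∀ t : ℝ, 0 ≤ t → t ≤ 2*(p:ℝ)+1 → a + t*H ∈ Set.Icc a b := by
    intro t h0 h1
    constructor
    · nlinarith
    · nlinarith [mul_le_mul_of_nonneg_right h1 hH0.le]
  have step : ∀ c d : ℝ, 0 ≤ d → 0 ≤ c - d → c + d ≤ 2*(p:ℝ)+1 →
      F c ≤ (F (c-d) + F (c+d))/2 + Φ (d * H) := by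
    intro c d hd h1 h2
    have hm1 := hmem (c-d) h1 (by linarith)
    have hm2 := hmem (c+d) (by linarith) h2
    have h := hconv _ hm1 _ hm2 (1/2) (by constructor <;> norm_num)
    have e1 : (1/2 : ℝ) * (a + (c-d)*H) + (1 - 1/2) * (a + (c+d)*H) = a + c * H := by ring
    have e2 : |a + (c+d)*H - (a + (c-d)*H)| = 2*d*H := by
      rw [show a + (c+d)*H - (a + (c-d)*H) = 2*(d*H) by ring,
        abs_of_nonneg (by positivity)]
      ring
    rw [e1, e2] at h
    rw [show (1 - 1/2 : ℝ) * (2*d*H) = d * H by ring,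
      show (1/2 : ℝ) * (2*d*H) = d * H by ring] at h
    simp only [hF]
    linarith
  have hstepF : ∀ t : ℝ, 1 ≤ t → t ≤ 2*(p:ℝ) → F t ≤ (F (t-1) + F (t+1))/2 + Φ H := by
    intro t h1 h2
    have := step t 1 zero_le_one (by linarith) (by linarith)
    rwa [one_mul] at this
  have hkey := key F (Φ H) p hstepF
  have hpnn : (0:ℝ) ≤ (p:ℝ) := Nat.cast_nonneg p
  have hmid : f ((a+b)/2) ≤ (F (p:ℝ) + F ((p:ℝ)+1))/2 + Φ ((1/2) * H) := by
    have hs := step ((p:ℝ) + 1/2) (1/2) (by norm_num) (by linarith) (by linarith)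
    have e0 : ((p:ℝ)+1/2) * H = (b-a)/2 := by
      rw [hH]; field_simp
    have e : (a+b)/2 = a + ((p:ℝ)+1/2) * H := by rw [e0]; ring
    rw [e]
    rw [show (p:ℝ)+1/2-1/2 = (p:ℝ) by ring, show (p:ℝ)+1/2+1/2 = (p:ℝ)+1 by ring] at hs
    simpa only [hF] using hs
  have hterm : ∀ i : ℕ, f (a + (i:ℝ) * (b-a) / (2*(p:ℝ)+1)) = F (i:ℝ) := by
    intro i; simp only [hF, hH]; rw [mul_div_assoc]
  have hsplit : ∑ x ∈ Finset.Ico 1 (2*p+1), f (a + (x:ℝ)*(b-a)/(2*(p:ℝ)+1))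
      = ∑ k ∈ Finset.range p, (F ((p:ℝ)-(k:ℝ)) + F ((p:ℝ)+1+(k:ℝ))) := by
    simp only [hterm]
    rw [← Finset.sum_Ico_consecutive (fun i : ℕ => F (i:ℝ))
      (by omega : 1 ≤ p+1) (by omega : p+1 ≤ 2*p+1)]
    rw [Finset.sum_add_distrib]
    congr 1
    · rw [Finset.sum_Ico_eq_sum_range]
      simp only [Nat.add_sub_cancel]
      rw [← Finset.sum_range_reflect (fun j => F ((p:ℝ)-(j:ℝ))) p]
      apply Finset.sum_congr rfl
      intro j hj
      have hj' := Finset.mem_range.mp hj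
      congr 1
      have e : p - 1 - j = p - (1 + j) := by omega
      rw [e, Nat.cast_sub (by omega)]
      push_cast
      ring
    · rw [Finset.sum_Ico_eq_sum_range]
      have e : 2*p+1 - (p+1) = p := by omega
      rw [e]
      apply Finset.sum_congr rfl
      intro j hj
      congr 1
      push_cast
      ring
  rw [hsplit]
  have hRHS : ∀ E : ℝ, (b-a)/(2*(2*(p:ℝ)+1)) * E/(b-a) = E/(2*(2*(p:ℝ)+1)) := by
    intro E
    field_simp
  rw [hRHS]
  have hPhi2 : (b-a)/(2*(2*(p:ℝ)+1)) = (1/2)*H := by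
    rw [hH]
    field_simp
  rw [hPhi2]
  rw [le_div_iff₀ (by positivity : (0:ℝ) < 2*(2*(p:ℝ)+1))]
  have hF0 : f a = F 0 := by simp [hF]
  have hFb : f b = F (2*(p:ℝ)+1) := by
    simp only [hF]
    congr 1
    linarith [hNH]
  rw [hF0, hFb]
  have c5 := mul_le_mul_of_nonneg_left hmid (by positivity : (0:ℝ) ≤ 2*(2*(p:ℝ)+1))
  clear hterm hsplit hmid hstepF step hmem hconv hΦ hf
  clear_value F H
  nlinarith [hkey, c5]
end

section
/- Let f:[a,b]→ℝ be a continuous convex function. Then for every n ∈ ℕ, n ≥ 1, f((a+b)/2) ≤ T_n(f)/(b−a) ≤ (f(a)+f(b))/2, where T_n(f) is the composite trapezoidal sum with n equal subintervals. -/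
open Finset

lemma sum_odd_sq (n : ℕ) : ∑ i ∈ Finset.range n, (2*i+1) = n^2 := by
  induction n with
  | zero => simp
  | succ k ih => rw [Finset.sum_range_succ, ih]; ring

lemma sum_odd_sq_real (n : ℕ) : ∑ i ∈ Finset.range n, (2*(i:ℝ)+1) = (n:ℝ)^2 := by
  have h := sum_odd_sq n
  have h2 : ((n:ℝ))^2 = ((n^2 : ℕ) : ℝ) := by push_cast; ring
  rw [h2, ← h, Nat.cast_sum]
  exact Finset.sum_congr rfl (fun i _ => by push_cast; ring)

theorem trapezoid_convex_hermite_hadamard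
    (a b : ℝ) (hab : a < b) (f : ℝ → ℝ)
    (hf : ContinuousOn f (Set.Icc a b))
    (hconv : ConvexOn ℝ (Set.Icc a b) f)
    (n : ℕ) (hn : 1 ≤ n) :
    f ((a + b) / 2) ≤ ((b - a) / (2 * n) * (f a + 2 * ∑ i ∈ Finset.Ico 1 n, f (a + i * (b - a) / n) + f b)) / (b - a) ∧ ((b - a) / (2 * n) * (f a + 2 * ∑ i ∈ Finset.Ico 1 n, f (a + i * (b - a) / n) + f b)) / (b - a) ≤ (f a + f b) / 2 := by
  have hba : (0:ℝ) < b - a := by linarith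
  have hn0 : (0:ℝ) < (n:ℝ) := by exact_mod_cast hn
  set x : ℕ → ℝ := fun i => a + i * (b - a) / n with hxdef
  have hmem : ∀ i ≤ n, x i ∈ Set.Icc a b := by
    intro i hi
    have hi' : (i:ℝ) ≤ n := by exact_mod_cast hi
    constructor
    · have : 0 ≤ (i:ℝ) * (b - a) / n := by positivity
      simp only [hxdef]; linarith
    · have h1 : (i:ℝ) * (b - a) / n ≤ (n:ℝ) * (b - a) / n := by gcongr
      have h2 : (n:ℝ) * (b - a) / n = b - a := by field_simp
      simp only [hxdef]; linarith [h1.trans_eq h2]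
  clear_value x
  have hx0 : x 0 = a := by simp [hxdef]
  have hxn : x n = b := by
    simp only [hxdef]; field_simp; ring
  -- key sum identity
  have hS : ∑ i ∈ Finset.range n, (f (x i) + f (x (i+1)))
      = f a + 2 * (∑ i ∈ Finset.Ico 1 n, f (x i)) + f b := by
    rw [Finset.sum_add_distrib]
    have h1 : ∑ i ∈ Finset.range n, f (x i)
        = f a + ∑ i ∈ Finset.Ico 1 n, f (x i) := by
      rw [Finset.range_eq_Ico, Finset.sum_eq_sum_Ico_succ_bot (by omega : 0 < n), hx0]
    have h2 : ∑ i ∈ Finset.range n, f (x (i+1))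
        = (∑ i ∈ Finset.Ico 1 n, f (x i)) + f b := by
      have : ∑ i ∈ Finset.range n, f (x (i+1)) = ∑ i ∈ Finset.Ico 1 (n+1), f (x i) := by
        rw [Finset.sum_Ico_eq_sum_range]
        simp [add_comm]
      rw [this, Finset.sum_Ico_succ_top (by omega : 1 ≤ n), hxn]
    rw [h1, h2]; ring
  have hE : ((b - a) / (2 * n) * (f a + 2 * ∑ i ∈ Finset.Ico 1 n, f (a + i * (b - a) / n) + f b)) / (b - a)
      = (∑ i ∈ Finset.range n, (f (x i) + f (x (i+1)))) / (2 * n) := by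
    have h0 : (∑ i ∈ Finset.Ico 1 n, f (a + i * (b - a) / n)) = ∑ i ∈ Finset.Ico 1 n, f (x i) := Finset.sum_congr rfl (fun i _ => by rw [hxdef])
    rw [h0, hS]
    field_simp
  rw [hE]
  constructor
  · -- lower bound
    have hm : ∀ i ∈ Finset.range n, (x i + x (i+1)) / 2 ∈ Set.Icc a b := by
      intro i hi
      simp only [Finset.mem_range] at hi
      obtain ⟨ha1, hb1⟩ := hmem i (by omega)
      obtain ⟨ha2, hb2⟩ := hmem (i+1) (by omega)
      constructor
      · linarith
      · linarith
    have hjensen := hconv.map_sum_le (t := Finset.range n)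
      (w := fun _ => 1 / (n:ℝ)) (p := fun i => (x i + x (i+1)) / 2)
      (fun i _ => by positivity)
      (by rw [Finset.sum_const, Finset.card_range, nsmul_eq_mul]; field_simp)
      hm
    simp only [smul_eq_mul] at hjensen
    have hmidsum : (∑ i ∈ Finset.range n, (1/(n:ℝ)) * ((x i + x (i+1)) / 2)) = (a + b) / 2 := by
      have heach : ∀ i ∈ Finset.range n, (1/(n:ℝ)) * ((x i + x (i+1)) / 2)
          = a / n + ((b - a) / (2 * n^2)) * (2*(i:ℝ)+1) := by
        intro i _
        simp only [hxdef]
        push_cast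
        field_simp
        ring
      rw [Finset.sum_congr rfl heach, Finset.sum_add_distrib, Finset.sum_const,
        Finset.card_range, nsmul_eq_mul, ← Finset.mul_sum, sum_odd_sq_real]
      field_simp
      ring
    rw [hmidsum] at hjensen
    have hhalf : ∀ i ∈ Finset.range n, f ((x i + x (i+1)) / 2) ≤ (f (x i) + f (x (i+1))) / 2 := by
      intro i hi
      simp only [Finset.mem_range] at hi
      have h1 := hmem i (by omega)
      have h2 := hmem (i+1) (by omega)
      have hc := hconv.2 h1 h2 (by norm_num : (0:ℝ) ≤ 1/2) (by norm_num : (0:ℝ) ≤ 1/2) (by norm_num)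
      simp only [smul_eq_mul] at hc
      calc f ((x i + x (i+1)) / 2)
          = f (1/2 * x i + 1/2 * x (i+1)) := by
            rw [show (x i + x (i+1))/2 = 1/2 * x i + 1/2 * x (i+1) from by ring]
        _ ≤ 1/2 * f (x i) + 1/2 * f (x (i+1)) := hc
        _ = (f (x i) + f (x (i+1))) / 2 := by ring
    calc f ((a + b) / 2) ≤ ∑ i ∈ Finset.range n, (1/(n:ℝ)) * f ((x i + x (i+1)) / 2) := hjensen
      _ ≤ ∑ i ∈ Finset.range n, ((f (x i) + f (x (i+1))) / (2 * n)) := by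
          apply Finset.sum_le_sum
          intro i hi
          have := mul_le_mul_of_nonneg_left (hhalf i hi) (by positivity : (0:ℝ) ≤ 1/(n:ℝ))
          calc (1/(n:ℝ)) * f ((x i + x (i+1)) / 2)
              ≤ (1/(n:ℝ)) * ((f (x i) + f (x (i+1))) / 2) := this
            _ = (f (x i) + f (x (i+1))) / (2 * n) := by ring
      _ = (∑ i ∈ Finset.range n, (f (x i) + f (x (i+1)))) / (2 * n) := by
          rw [← Finset.sum_div]
  · -- upper bound
    have hinterp : ∀ i ≤ n, f (x i) ≤ (1 - (i:ℝ)/n) * f a + ((i:ℝ)/n) * f b := by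
      intro i hi
      have hi' : (i:ℝ) ≤ n := by exact_mod_cast hi
      have ht0 : (0:ℝ) ≤ (i:ℝ)/n := by positivity
      have ht1 : (0:ℝ) ≤ 1 - (i:ℝ)/n := by
        rw [sub_nonneg, div_le_one hn0]; exact hi'
      have hmema : a ∈ Set.Icc a b := ⟨le_refl a, le_of_lt hab⟩
      have hmemb : b ∈ Set.Icc a b := ⟨le_of_lt hab, le_refl b⟩
      have hc := hconv.2 hmema hmemb ht1 ht0 (by ring)
      simp only [smul_eq_mul] at hc
      have hxeq : (1 - (i:ℝ)/n) * a + ((i:ℝ)/n) * b = x i := by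
        simp only [hxdef]; field_simp; ring
      rw [hxeq] at hc
      exact hc
    have hSle : (∑ i ∈ Finset.range n, (f (x i) + f (x (i+1)))) ≤ n * (f a + f b) := by
      have step : ∀ i ∈ Finset.range n, f (x i) + f (x (i+1))
          ≤ 2 * f a + (2*(i:ℝ)+1) * ((f b - f a) / n) := by
        intro i hi
        simp only [Finset.mem_range] at hi
        have h1 := hinterp i (by omega)
        have h2 := hinterp (i+1) (by omega)
        push_cast at h2
        have heq : (1 - (i:ℝ)/n) * f a + ((i:ℝ)/n) * f b
            + ((1 - ((i:ℝ)+1)/n) * f a + (((i:ℝ)+1)/n) * f b)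
            = 2 * f a + (2*(i:ℝ)+1) * ((f b - f a) / n) := by
          field_simp
          ring
        linarith
      calc (∑ i ∈ Finset.range n, (f (x i) + f (x (i+1))))
          ≤ ∑ i ∈ Finset.range n, (2 * f a + (2*(i:ℝ)+1) * ((f b - f a) / n)) :=
            Finset.sum_le_sum step
        _ = n * (f a + f b) := by
            rw [Finset.sum_add_distrib, Finset.sum_const, Finset.card_range, ← Finset.sum_mul,
              sum_odd_sq_real]
            field_simp
            ring
    rw [div_le_iff₀ (by positivity : (0:ℝ) < 2 * n)]
    calc (∑ i ∈ Finset.range n, (f (x i) + f (x (i+1)))) ≤ n * (f a + f b) := hSle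
      _ = (f a + f b) / 2 * (2 * n) := by ring
end

section
/- Let f:[a,b]→ℝ be continuous and Φ-convex, and suppose n²·Φ((b−a)/n) → 0 as n → ∞ and f is twice continuously differentiable on [a,b]. Then the classical Hermite–Hadamard inequality holds: f((a+b)/2) ≤ (1/(b−a))·∫_a^b f(x) dx ≤ (f(a)+f(b))/2. -/
open Finset

open Set in
lemma phi_aux_convexOn
    (a b : ℝ) (hab : a < b) (f Φ : ℝ → ℝ)
    (hconv : ∀ x ∈ Set.Icc a b, ∀ y ∈ Set.Icc a b, ∀ t ∈ Set.Icc (0:ℝ) 1, f (t * x + (1 - t) * y) ≤ t * f x + (1 - t) * f y + t * Φ ((1 - t) * |y - x|) + (1 - t) * Φ (t * |y - x|))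
    (hC2 : ContDiffOn ℝ 2 f (Set.Icc a b))
    (hlim : Filter.Tendsto (fun n : ℕ => (n : ℝ) ^ 2 * Φ ((b - a) / n))
      Filter.atTop (nhds 0)) : ConvexOn ℝ (Set.Icc a b) f := by
  have hO : IsOpen (Set.Ioo a b) := isOpen_Ioo
  have hC2' : ContDiffOn ℝ 2 f (Set.Ioo a b) := hC2.mono Set.Ioo_subset_Icc_self
  have hdf : DifferentiableOn ℝ f (Set.Ioo a b) := hC2'.differentiableOn two_ne_zero
  have hC1d : ContDiffOn ℝ 1 (deriv f) (Set.Ioo a b) :=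
    hC2'.deriv_of_isOpen (m := 1) hO (by norm_num)
  have hdf' : DifferentiableOn ℝ (deriv f) (Set.Ioo a b) := hC1d.differentiableOn one_ne_zero
  have hcontf'' : ContinuousOn (deriv (deriv f)) (Set.Ioo a b) :=
    (hC1d.deriv_of_isOpen (m := 0) hO (by norm_num)).continuousOn
  -- key nonnegativity of second derivative
  have key : ∀ x ∈ Set.Ioo a b, 0 ≤ deriv (deriv f) x := by
    intro x hx
    by_contra hneg
    push_neg at hneg
    set c : ℝ := deriv (deriv f) x / 2 with hc_def
    have hc : c < 0 := by simp only [hc_def]; linarith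
    -- find δ-ball where f'' < c
    have hcAt : ContinuousAt (deriv (deriv f)) x := hcontf''.continuousAt (hO.mem_nhds hx)
    have hV : (deriv (deriv f)) ⁻¹' (Set.Iio c) ∈ nhds x :=
      hcAt.preimage_mem_nhds (Iio_mem_nhds (by linarith))
    have hW : (deriv (deriv f)) ⁻¹' (Set.Iio c) ∩ Set.Ioo a b ∈ nhds x :=
      Filter.inter_mem hV (hO.mem_nhds hx)
    obtain ⟨δ, hδ0, hδ⟩ := Metric.mem_nhds_iff.mp hW
    -- choose n
    have hε : (0:ℝ) < (-c) * (b - a) ^ 2 / 2 := by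
      have : (0:ℝ) < (b - a) ^ 2 := pow_pos (by linarith) 2
      nlinarith
    have ev1 : ∀ᶠ n : ℕ in Filter.atTop, (n : ℝ) ^ 2 * Φ ((b - a) / n) < (-c) * (b - a) ^ 2 / 2 :=
      hlim.eventually (gt_mem_nhds hε)
    have ev2 : ∀ᶠ n : ℕ in Filter.atTop, (b - a) / (n : ℝ) < δ :=
      (tendsto_const_div_atTop_nhds_zero_nat (b - a)).eventually (gt_mem_nhds hδ0)
    have ev3 : ∀ᶠ n : ℕ in Filter.atTop, 1 ≤ n := Filter.eventually_ge_atTop 1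
    obtain ⟨n, ⟨hK, hhδ⟩, hn1⟩ := ((ev1.and ev2).and ev3).exists
    have hn0 : (0:ℝ) < n := by exact_mod_cast hn1
    set h : ℝ := (b - a) / n with hh_def
    have hh0 : 0 < h := div_pos (by linarith) hn0
    -- points within distance h of x are in the good ball
    have hball : ∀ y : ℝ, |y - x| ≤ h → deriv (deriv f) y < c ∧ y ∈ Set.Ioo a b := by
      intro y hy
      have : y ∈ Metric.ball x δ := by
        rw [Metric.mem_ball, Real.dist_eq]; linarith
      exact ⟨(hδ this).1, (hδ this).2⟩
    have hxmh : x - h ∈ Set.Icc a b := by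
      have := (hball (x - h) (by rw [show x - h - x = -h by ring, abs_neg, abs_of_pos hh0])).2
      exact Set.Ioo_subset_Icc_self this
    have hxph : x + h ∈ Set.Icc a b := by
      have := (hball (x + h) (by rw [show x + h - x = h by ring, abs_of_pos hh0])).2
      exact Set.Ioo_subset_Icc_self this
    -- midpoint Φ-convexity
    have hmid : f x ≤ (f (x - h) + f (x + h)) / 2 + Φ h := by
      have H := hconv (x - h) hxmh (x + h) hxph (1/2) (by norm_num)
      have e1 : (1/2 : ℝ) * (x - h) + (1 - 1/2) * (x + h) = x := by ring
      have e2 : |x + h - (x - h)| = 2 * h := by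
        rw [show x + h - (x - h) = 2 * h by ring, abs_of_pos (by linarith)]
      rw [e1, e2, show (1 - 1/2 : ℝ) * (2 * h) = h by ring,
        show (1/2 : ℝ) * (2 * h) = h by ring] at H
      linarith
    -- derivatives available near x
    have hfd : ∀ y : ℝ, |y - x| ≤ h → HasDerivAt f (deriv f y) y := fun y hy =>
      (hdf.differentiableAt (hO.mem_nhds (hball y hy).2)).hasDerivAt
    have hfd' : ∀ y : ℝ, |y - x| ≤ h → HasDerivAt (deriv f) (deriv (deriv f) y) y := fun y hy =>
      (hdf'.differentiableAt (hO.mem_nhds (hball y hy).2)).hasDerivAt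
    -- F t = f (x+t) + f (x-t) - c t^2 has explicit derivative on [0,h]
    have habs : ∀ t : ℝ, t ∈ Set.Icc 0 h → |x + t - x| ≤ h ∧ |x - t - x| ≤ h := by
      intro t ht
      constructor
      · rw [show x + t - x = t by ring, abs_of_nonneg ht.1]; exact ht.2
      · rw [show x - t - x = -t by ring, abs_neg, abs_of_nonneg ht.1]; exact ht.2
    have hF : ∀ t ∈ Set.Icc (0:ℝ) h,
        HasDerivAt (fun t => f (x + t) + f (x - t) - c * t ^ 2)
          (deriv f (x + t) - deriv f (x - t) - 2 * c * t) t := by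
      intro t ht
      have h1 : HasDerivAt (fun s : ℝ => x + s) 1 t := by
        simpa using (hasDerivAt_id t).const_add x
      have h2 : HasDerivAt (fun s : ℝ => x - s) (-1) t := by
        simpa using (hasDerivAt_id t).const_sub x
      have H1 := (hfd (x + t) (habs t ht).1).comp t h1
      have H2 := (hfd (x - t) (habs t ht).2).comp t h2
      have H3 : HasDerivAt (fun s : ℝ => c * s ^ 2) (2 * c * t) t := by
        have := (hasDerivAt_pow 2 t).const_mul c
        simpa [mul_comm, mul_assoc, mul_left_comm] using this
      have := (H1.add H2).sub H3
      exact this.congr_deriv (by ring)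
    -- deriv of F is nonpositive on interior
    have hderiv_nonpos : ∀ t ∈ interior (Set.Icc (0:ℝ) h),
        deriv (fun t => f (x + t) + f (x - t) - c * t ^ 2) t ≤ 0 := by
      intro t ht
      rw [interior_Icc] at ht
      have ht' : t ∈ Set.Icc (0:ℝ) h := Set.Ioo_subset_Icc_self ht
      rw [(hF t ht').deriv]
      -- MVT for deriv f on [x - t, x + t]
      have htpos : 0 < t := ht.1
      have hlt : x - t < x + t := by linarith
      have hcont' : ContinuousOn (deriv f) (Set.Icc (x - t) (x + t)) := by
        intro y hy
        have hy' : |y - x| ≤ h := by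
          rw [abs_le]; constructor <;> [linarith [hy.1, ht'.2]; linarith [hy.2, ht'.2]]
        exact (hfd' y hy').continuousAt.continuousWithinAt
      have hd' : ∀ y ∈ Set.Ioo (x - t) (x + t), HasDerivAt (deriv f) (deriv (deriv f) y) y := by
        intro y hy
        have hy' : |y - x| ≤ h := by
          rw [abs_le]; constructor <;> [linarith [hy.1, ht'.2]; linarith [hy.2, ht'.2]]
        exact hfd' y hy'
      obtain ⟨η, hη, hslope⟩ := exists_hasDerivAt_eq_slope (deriv f) (deriv (deriv f)) hlt hcont' hd'
      have hη' : |η - x| ≤ h := by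
        rw [abs_le]; constructor <;> [linarith [hη.1, ht'.2]; linarith [hη.2, ht'.2]]
      have hηc : deriv (deriv f) η < c := (hball η hη').1
      have hdiff : deriv f (x + t) - deriv f (x - t) = deriv (deriv f) η * (2 * t) := by
        rw [hslope, show x + t - (x - t) = 2 * t by ring,
          div_mul_cancel₀ _ (show (2*t) ≠ 0 by positivity)]
      nlinarith
    -- antitone, hence second-difference upper bound
    have hAnti : AntitoneOn (fun t => f (x + t) + f (x - t) - c * t ^ 2) (Set.Icc (0:ℝ) h) := by
      apply antitoneOn_of_deriv_nonpos (convex_Icc 0 h)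
      · intro t ht; exact (hF t ht).continuousAt.continuousWithinAt
      · intro t ht
        rw [interior_Icc] at ht
        exact ((hF t (Set.Ioo_subset_Icc_self ht)).differentiableAt).differentiableWithinAt
      · exact hderiv_nonpos
    have hMVT : f (x + h) + f (x - h) - c * h ^ 2 ≤ 2 * f x := by
      have := hAnti (Set.left_mem_Icc.mpr hh0.le) (Set.right_mem_Icc.mpr hh0.le) hh0.le
      simp only [add_zero, sub_zero] at this
      nlinarith [this]
    -- contradiction
    have hΦh : -2 * Φ h ≤ c * h ^ 2 := by linarith
    have hh2 : h ^ 2 = (b - a) ^ 2 / (n : ℝ) ^ 2 := by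
      rw [hh_def]; field_simp
    have hn2 : (0:ℝ) < (n : ℝ) ^ 2 := by positivity
    have : -2 * ((n:ℝ)^2 * Φ h) ≤ c * (b - a) ^ 2 := by
      have := mul_le_mul_of_nonneg_left hΦh hn2.le
      calc -2 * ((n:ℝ)^2 * Φ h) = (n:ℝ)^2 * (-2 * Φ h) := by ring
        _ ≤ (n:ℝ)^2 * (c * h ^ 2) := by exact mul_le_mul_of_nonneg_left hΦh hn2.le
        _ = c * (b - a) ^ 2 := by rw [hh2]; field_simp
    rw [hh_def] at this
    nlinarith [hK]
  refine convexOn_of_deriv2_nonneg (convex_Icc a b) hC2.continuousOn ?_ ?_ ?_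
  · rw [interior_Icc]; exact hdf
  · rw [interior_Icc]; exact hdf'
  · intro x hx
    rw [interior_Icc] at hx
    simpa [Function.iterate_succ, Function.comp] using key x hx

theorem phi_convex_hermite_hadamard_limit
    (a b : ℝ) (hab : a < b) (f Φ : ℝ → ℝ)
    (hΦ : ∀ t ∈ Set.Icc (0 : ℝ) (b - a), 0 ≤ Φ t)
    (hconv : ∀ x ∈ Set.Icc a b, ∀ y ∈ Set.Icc a b, ∀ t ∈ Set.Icc (0:ℝ) 1, f (t * x + (1 - t) * y) ≤ t * f x + (1 - t) * f y + t * Φ ((1 - t) * |y - x|) + (1 - t) * Φ (t * |y - x|))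
    (hC2 : ContDiffOn ℝ 2 f (Set.Icc a b))
    (hlim : Filter.Tendsto (fun n : ℕ => (n : ℝ) ^ 2 * Φ ((b - a) / n))
      Filter.atTop (nhds 0)) :
    f ((a + b) / 2) ≤ (1 / (b - a)) * ∫ x in a..b, f x ∧
    (1 / (b - a)) * ∫ x in a..b, f x ≤ (f a + f b) / 2 := by
  have hcv : ConvexOn ℝ (Set.Icc a b) f := phi_aux_convexOn a b hab f Φ hconv hC2 hlim
  have hba : (0:ℝ) < b - a := by linarith
  have hcont : ContinuousOn f (Set.Icc a b) := hC2.continuousOn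
  have hfint : IntervalIntegrable f MeasureTheory.volume a b := by
    apply hcont.intervalIntegrable_of_Icc hab.le
  have hmaps : Set.MapsTo (fun x => a + b - x) (Set.Icc a b) (Set.Icc a b) := by
    intro x hx
    obtain ⟨h1, h2⟩ := hx
    exact ⟨by simp; linarith, by simp; linarith⟩
  have hcont2 : ContinuousOn (fun x => f (a + b - x)) (Set.Icc a b) :=
    hcont.comp ((continuous_const.sub continuous_id).continuousOn) hmaps
  have hgint : IntervalIntegrable (fun x => f (a + b - x)) MeasureTheory.volume a b :=
    hcont2.intervalIntegrable_of_Icc hab.le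
  constructor
  · -- left inequality
    have hrefl : ∀ x ∈ Set.Icc a b, f ((a + b) / 2) ≤ (f x + f (a + b - x)) / 2 := by
      intro x hx
      have hx' : a + b - x ∈ Set.Icc a b := hmaps hx
      have H := hcv.2 hx hx' (by norm_num : (0:ℝ) ≤ 1/2) (by norm_num : (0:ℝ) ≤ 1/2)
        (by norm_num : (1/2 : ℝ) + 1/2 = 1)
      have e : (1/2 : ℝ) • x + (1/2 : ℝ) • (a + b - x) = (a + b) / 2 := by
        simp [smul_eq_mul]; ring
      rw [e] at H
      simp only [smul_eq_mul] at H
      linarith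
    have h1 : ∫ _x in a..b, f ((a + b) / 2) ≤ ∫ x in a..b, (f x + f (a + b - x)) / 2 := by
      apply intervalIntegral.integral_mono_on hab.le intervalIntegrable_const
        ((hfint.add hgint).div_const 2)
      exact hrefl
    rw [intervalIntegral.integral_const] at h1
    have h2 : ∫ x in a..b, (f x + f (a + b - x)) / 2
        = ((∫ x in a..b, f x) + ∫ x in a..b, f (a + b - x)) / 2 := by
      rw [intervalIntegral.integral_div, intervalIntegral.integral_add hfint hgint]
    have h3 : (∫ x in a..b, f (a + b - x)) = ∫ x in a..b, f x := by
      have := intervalIntegral.integral_comp_sub_left (a := a) (b := b) f (a + b)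
      simpa using this
    rw [h2, h3] at h1
    have h4 : (b - a) * f ((a + b) / 2) ≤ ∫ x in a..b, f x := by
      simp only [smul_eq_mul] at h1; linarith
    rw [show (1 / (b - a)) * ∫ x in a..b, f x = (∫ x in a..b, f x) / (b - a) by ring]
    rw [le_div_iff₀ hba]
    linarith
  · -- right inequality
    have hpt : ∀ x ∈ Set.Icc a b, f x ≤ ((b - x) * f a + (x - a) * f b) / (b - a) := by
      intro x hx
      have ht0 : (0:ℝ) ≤ (b - x) / (b - a) := div_nonneg (by linarith [hx.2]) hba.le
      have hs0 : (0:ℝ) ≤ (x - a) / (b - a) := div_nonneg (by linarith [hx.1]) hba.le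
      have hts : (b - x) / (b - a) + (x - a) / (b - a) = 1 := by field_simp; ring
      have H := hcv.2 (Set.left_mem_Icc.mpr hab.le) (Set.right_mem_Icc.mpr hab.le) ht0 hs0 hts
      have e : ((b - x) / (b - a)) • a + ((x - a) / (b - a)) • b = x := by
        simp only [smul_eq_mul]; field_simp; ring
      rw [e] at H
      simp only [smul_eq_mul] at H
      calc f x ≤ (b - x) / (b - a) * f a + (x - a) / (b - a) * f b := H
        _ = ((b - x) * f a + (x - a) * f b) / (b - a) := by ring
    have hlin : IntervalIntegrable (fun x => ((b - x) * f a + (x - a) * f b) / (b - a))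
        MeasureTheory.volume a b := by
      apply Continuous.intervalIntegrable; continuity
    have h1 : ∫ x in a..b, f x ≤ ∫ x in a..b, ((b - x) * f a + (x - a) * f b) / (b - a) :=
      intervalIntegral.integral_mono_on hab.le hfint hlin hpt
    have h2 : ∫ x in a..b, ((b - x) * f a + (x - a) * f b) / (b - a)
        = (b - a) * ((f a + f b) / 2) := by
      have e : ∀ x : ℝ, ((b - x) * f a + (x - a) * f b) / (b - a)
          = (b * f a - a * f b) / (b - a) + ((f b - f a) / (b - a)) * x := by
        intro x; field_simp; ring
      simp only [e]
      rw [intervalIntegral.integral_add (intervalIntegrable_const)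
        (by apply Continuous.intervalIntegrable; continuity :
          IntervalIntegrable (fun x => ((f b - f a) / (b - a)) * x) MeasureTheory.volume a b),
        intervalIntegral.integral_const, intervalIntegral.integral_const_mul, integral_id]
      rw [smul_eq_mul]
      field_simp
      ring
    rw [h2] at h1
    rw [show (1 / (b - a)) * ∫ x in a..b, f x = (∫ x in a..b, f x) / (b - a) by ring]
    rw [div_le_iff₀ hba]
    linarith
end
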